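/- arXiv:1308.2537 — 2 statements merged into one kernel-verified Lean document; each statement's English description precedes it below -/
import Mathlib

section
/- Let T be a rooted phylogenetic X-tree and let L ⊆ (X choose 2) be a set of cords with ∪L = X. Then L is a topological lasso for T if and only if for every interior vertex v of T, the child-edge graph G(L, v) is a clique. -/
open scoped Classical

/-- A rooted `X`-tree on vertex type `V`: a finite rooted tree encoded by a parent
function, whose leaves (the vertices with no children) are bijectively labelled by `X`. -/
structure XTree (X V : Type) where
  root : V
  parent : V → V
  parent_root : parent root = root
  reaches : ∀ v : V, ∃ n : ℕ, parent^[n] v = root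
  leaf : X → V
  leaf_inj : Function.Injective leaf
  leaf_iff : ∀ v : V, (∀ w : V, parent w = v → w = v) ↔ v ∈ Set.range leaf

namespace XTree

variable {X V : Type}

/-- The children of a vertex. -/
def children (T : XTree X V) (v : V) : Set V := {w | T.parent w = v ∧ w ≠ v}

def IsLeaf (T : XTree X V) (v : V) : Prop := v ∈ Set.range T.leaf

def Interior (T : XTree X V) (v : V) : Prop := ¬ T.IsLeaf v

/-- Phylogenetic: root has at least two children, and no non-root vertex has exactly
one child (no degree-two vertices apart from possibly the root). -/
def IsPhylo (T : XTree X V) : Prop :=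
  2 ≤ (T.children T.root).ncard ∧
    ∀ v : V, v ≠ T.root → T.Interior v → 2 ≤ (T.children v).ncard

/-- `T.Desc v w` : `w` is a descendant of `v` (or equal to `v`). -/
def Desc (T : XTree X V) (v w : V) : Prop := ∃ n : ℕ, T.parent^[n] w = v

/-- The set of leaf labels below a vertex. -/
def leafSet (T : XTree X V) (v : V) : Set X := {x | T.Desc v (T.leaf x)}

/-- `v` is the last common ancestor of the set `S` of vertices. -/
def IsLCA (T : XTree X V) (v : V) (S : Set V) : Prop :=
  (∀ w ∈ S, T.Desc v w) ∧ ∀ u : V, (∀ w ∈ S, T.Desc u w) → T.Desc u v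

/-- Not a star tree: some interior vertex other than the root. -/
def NonDegenerate (T : XTree X V) : Prop := ∃ v : V, T.Interior v ∧ v ≠ T.root

end XTree

/-- A cord: a 2-element subset of `X`. -/
def IsCord {X : Type} (c : Set X) : Prop := ∃ a b : X, a ≠ b ∧ c = {a, b}

/-- The graph `Γ(L)` with vertex set `X` and edge set `L`. -/
def cordGraph {X : Type} (L : Set (Set X)) : SimpleGraph X where
  Adj a b := a ≠ b ∧ ({a, b} : Set X) ∈ L
  symm := by
    constructor
    intro a b h
    exact ⟨Ne.symm h.1, by rw [Set.pair_comm]; exact h.2⟩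
  loopless := by constructor; intro a h; exact h.1 rfl

/-- Topological lasso, via the child-edge graph characterization: for every interior
vertex, any two distinct child subtrees are joined by a cord of `L`. -/
def XTree.IsTopoLasso {X V : Type} (T : XTree X V) (L : Set (Set X)) : Prop :=
  ∀ v c₁ c₂ : V, c₁ ∈ T.children v → c₂ ∈ T.children v → c₁ ≠ c₂ →
    ∃ a b : X, a ∈ T.leafSet c₁ ∧ b ∈ T.leafSet c₂ ∧ ({a, b} : Set X) ∈ L

/-- Set-inclusion minimal topological lasso. -/
def XTree.IsMinTopoLasso {X V : Type} (T : XTree X V) (L : Set (Set X)) : Prop :=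
  T.IsTopoLasso L ∧ ∀ L' ⊆ L, T.IsTopoLasso L' → L' = L

/-- A nonempty vertex set inducing a connected subgraph with no cut vertex. -/
def GoodSet {α : Type} (G : SimpleGraph α) (B : Set α) : Prop :=
  B.Nonempty ∧ (G.induce B).Connected ∧
    ∀ v ∈ B, (B \ {v}).Nonempty → (G.induce (B \ {v})).Connected

/-- A block: a maximal connected induced subgraph without a cut vertex. -/
def IsBlock {α : Type} (G : SimpleGraph α) (B : Set α) : Prop :=
  GoodSet G B ∧ ∀ C : Set α, GoodSet G C → B ⊆ C → B = C

/-- A block graph: every block is a clique. -/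
def IsBlockGraph {α : Type} (G : SimpleGraph α) : Prop :=
  ∀ B : Set α, IsBlock G B → G.IsClique B

/-- A cut vertex: deleting it disconnects the graph. -/
def IsCutVtx {α : Type} (G : SimpleGraph α) (v : α) : Prop :=
  ¬ (G.induce {w | w ≠ v}).Connected

/-- Claw-free: no induced `K_{1,3}`. -/
def ClawFree {α : Type} (G : SimpleGraph α) : Prop :=
  ¬ ∃ v a b c : α, a ≠ b ∧ a ≠ c ∧ b ≠ c ∧
    G.Adj v a ∧ G.Adj v b ∧ G.Adj v c ∧ ¬ G.Adj a b ∧ ¬ G.Adj a c ∧ ¬ G.Adj b c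

/-- The child-edge graph `G(L,v)`: vertices are the children of `v` (equivalently
the child edges of `v`), two of them adjacent if a cord of `L` joins their subtrees. -/
def childGraph {X V : Type} (T : XTree X V) (L : Set (Set X)) (v : V) :
    SimpleGraph {c : V // c ∈ T.children v} where
  Adj c₁ c₂ := c₁ ≠ c₂ ∧ ∃ a b : X,
    a ∈ T.leafSet (c₁ : V) ∧ b ∈ T.leafSet (c₂ : V) ∧ ({a, b} : Set X) ∈ L
  symm := by
    constructor
    rintro c₁ c₂ ⟨h, a, b, ha, hb, hm⟩
    exact ⟨Ne.symm h, b, a, hb, ha, by rw [Set.pair_comm]; exact hm⟩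
  loopless := by constructor; rintro c ⟨h, -⟩; exact h rfl

/-- `cl(T)`: the clusters of non-root interior vertices. -/
def clSet {X V : Type} (T : XTree X V) : Set (Set X) :=
  {A | ∃ v : V, v ≠ T.root ∧ T.Interior v ∧ A = T.leafSet v}

/-- A cluster marker map for `T` and the ordering of `X`:
`f A` is the `σ`-least element of `A` not used as marker of a proper subcluster. -/
def IsClusterMarker {X V : Type} [LinearOrder X] (T : XTree X V) (f : Set X → X) : Prop :=
  ∀ A ∈ clSet T,
    ((∃ B ∈ clSet T, B ⊂ A) →
      IsLeast (A \ {y | ∃ B ∈ clSet T, B ⊂ A ∧ f B = y}) (f A)) ∧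
    ((¬ ∃ B ∈ clSet T, B ⊂ A) → IsLeast A (f A))

/-- The marker of a child `c` of an interior vertex: the label of `c` if `c` is a leaf,
and `f (L(c))` if `c` is interior. -/
def markRel {X V : Type} (T : XTree X V) (f : Set X → X) (c : V) (a : X) : Prop :=
  T.leaf a = c ∨ (T.Interior c ∧ a = f (T.leafSet c))

/-- `L_{(T,f)}(v)`: all cords between markers of distinct children of `v`. -/
def lassoAt {X V : Type} (T : XTree X V) (f : Set X → X) (v : V) : Set (Set X) :=
  {c | ∃ c₁ c₂ : V, c₁ ∈ T.children v ∧ c₂ ∈ T.children v ∧ c₁ ≠ c₂ ∧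
    ∃ a b : X, markRel T f c₁ a ∧ markRel T f c₂ b ∧ c = {a, b}}

/-- `L_{(T,f)}`: the union over all interior vertices of `L_{(T,f)}(v)`. -/
def lassoFull {X V : Type} (T : XTree X V) (f : Set X → X) : Set (Set X) :=
  {c | ∃ v : V, T.Interior v ∧ c ∈ lassoAt T f v}

/-- An equidistant proper edge-weighting of `T`, encoded by the height function
`t v` = distance from `v` to any leaf below it (so all leaves are equidistant
from the root); properness: interior edges have positive weight. -/
def EquidistantProper {X V : Type} (T : XTree X V) (t : V → ℝ) : Prop :=
  (∀ x : X, t (T.leaf x) = 0) ∧ (∀ v : V, t v ≤ t (T.parent v)) ∧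
    ∀ v : V, v ≠ T.root → T.Interior v → t v < t (T.parent v)

/-- Equivalence of two `X`-trees: a root-, parent- and labelling-preserving bijection. -/
def TreeEquiv {X V V' : Type} (T : XTree X V) (T' : XTree X V') : Prop :=
  ∃ φ : V ≃ V', φ T.root = T'.root ∧ (∀ v, φ (T.parent v) = T'.parent (φ v)) ∧
    ∀ x, φ (T.leaf x) = T'.leaf x

/-- `S` is (equivalent to) the restriction `T|_Y`: the clusters of `S` are exactly the
nonempty traces on `Y` of the clusters of `T`. -/
def IsRestriction {X : Type} (Y : Set X) {V W : Type}
    (T : XTree X V) (S : XTree (↥Y) W) : Prop :=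
  ∀ A : Set X, A ⊆ Y →
    ((∃ w : W, A = Subtype.val '' S.leafSet w) ↔ (A.Nonempty ∧ ∃ v : V, A = T.leafSet v ∩ Y))

/-- The restriction `L|_Y` of a set of cords of `X` to cords of `Y`. -/
def restrictLasso {X : Type} (Y : Set X) (L : Set (Set X)) : Set (Set ↥Y) :=
  {c | ∃ a b : ↥Y, a ≠ b ∧ c = {a, b} ∧ ({(a : X), (b : X)} : Set X) ∈ L}

namespace XTree

variable {X V : Type}

section Basic
variable (T : XTree X V)

lemma desc_refl (v : V) : T.Desc v v := ⟨0, rfl⟩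

lemma desc_trans {u v w : V} (h1 : T.Desc u v) (h2 : T.Desc v w) : T.Desc u w := by
  obtain ⟨n, hn⟩ := h1; obtain ⟨m, hm⟩ := h2
  exact ⟨n + m, by rw [Function.iterate_add_apply, hm, hn]⟩

lemma root_iter : ∀ n : ℕ, T.parent^[n] T.root = T.root := by
  intro n; induction n with
  | zero => rfl
  | succ n ih => rw [Function.iterate_succ_apply, T.parent_root, ih]

lemma desc_root (v : V) : T.Desc T.root v := T.reaches v

lemma parent_desc (v : V) : T.Desc (T.parent v) v := ⟨1, by simp⟩

lemma desc_of_desc_parent {u w : V} (h : T.Desc u (T.parent w)) : T.Desc u w := by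
  obtain ⟨n, hn⟩ := h; exact ⟨n + 1, by rwa [Function.iterate_succ_apply]⟩

lemma fixed_iter {v : V} (h : T.parent v = v) : ∀ n : ℕ, T.parent^[n] v = v := by
  intro n; induction n with
  | zero => rfl
  | succ n ih => rw [Function.iterate_succ_apply, h, ih]

lemma parent_eq_self_iff {v : V} : T.parent v = v ↔ v = T.root := by
  constructor
  · intro h
    obtain ⟨N, hN⟩ := T.reaches v
    rw [T.fixed_iter h N] at hN; exact hN
  · rintro rfl; exact T.parent_root

lemma desc_antisymm {u v : V} (h1 : T.Desc u v) (h2 : T.Desc v u) : u = v := by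
  obtain ⟨n, hn⟩ := h1; obtain ⟨m, hm⟩ := h2
  have hp : T.parent^[m + n] v = v := by rw [Function.iterate_add_apply, hn, hm]
  rcases Nat.eq_zero_or_pos (m + n) with h0 | hpos
  · have hm0 : m = 0 := by omega
    rw [hm0] at hm; exact hm.symm ▸ rfl
  · -- v is on a cycle, so v = root
    have hcyc : ∀ k : ℕ, T.parent^[(m + n) * k] v = v := by
      intro k; induction k with
      | zero => rfl
      | succ k ih => rw [Nat.mul_succ, Function.iterate_add_apply, hp, ih]
    obtain ⟨N, hN⟩ := T.reaches v
    have hge : N ≤ (m + n) * N := Nat.le_mul_of_pos_left N hpos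
    have hv : v = T.root := by
      have := hcyc N
      rw [← Nat.sub_add_cancel hge, Function.iterate_add_apply, hN,
        T.root_iter] at this
      exact this.symm
    subst hv
    rw [T.root_iter] at hn
    rw [← hn]

lemma desc_comparable {u w v : V} (h1 : T.Desc u v) (h2 : T.Desc w v) :
    T.Desc u w ∨ T.Desc w u := by
  obtain ⟨n, hn⟩ := h1; obtain ⟨m, hm⟩ := h2
  rcases le_total n m with h | h
  · right
    refine ⟨m - n, ?_⟩
    rw [← hn, ← Function.iterate_add_apply, Nat.sub_add_cancel h, hm]
  · left
    refine ⟨n - m, ?_⟩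
    rw [← hm, ← Function.iterate_add_apply, Nat.sub_add_cancel h, hn]

lemma desc_parent_of_ne {u v : V} (h : T.Desc u v) (hne : u ≠ v) :
    T.Desc u (T.parent v) := by
  obtain ⟨n, hn⟩ := h
  cases n with
  | zero => exact absurd hn.symm hne
  | succ k => exact ⟨k, by rwa [Function.iterate_succ_apply] at hn⟩

lemma child_ne_root {c v : V} (h : c ∈ T.children v) : c ≠ T.root := by
  rintro rfl
  exact h.2 (T.parent_root.symm.trans h.1)

lemma sibling_disjoint {v c₁ c₂ w : V} (h1 : c₁ ∈ T.children v) (h2 : c₂ ∈ T.children v)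
    (hne : c₁ ≠ c₂) (hd1 : T.Desc c₁ w) (hd2 : T.Desc c₂ w) : False := by
  have hcomp := T.desc_comparable hd1 hd2
  rcases hcomp with h | h
  · -- c₂ below c₁
    have := T.desc_parent_of_ne h hne
    rw [h2.1] at this
    exact h1.2 (T.desc_antisymm this ⟨1, by simp [h1.1]⟩)
  · have := T.desc_parent_of_ne h (Ne.symm hne)
    rw [h1.1] at this
    exact h2.2 (T.desc_antisymm this ⟨1, by simp [h2.1]⟩)

lemma exists_child_above {v w : V} (h : T.Desc v w) (hne : w ≠ v) :
    ∃ c ∈ T.children v, T.Desc c w := by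
  classical
  have hex : ∃ n, T.parent^[n] w = v := h
  set n₀ := Nat.find hex with hn₀
  have hspec : T.parent^[n₀] w = v := Nat.find_spec hex
  have hpos : n₀ ≠ 0 := by
    intro h0
    rw [h0] at hspec; exact hne hspec
  refine ⟨T.parent^[n₀ - 1] w, ⟨?_, ?_⟩, ⟨n₀ - 1, rfl⟩⟩
  · have : T.parent^[(n₀ - 1) + 1] w = v := by
      rwa [Nat.sub_add_cancel (Nat.pos_of_ne_zero hpos)]
    rwa [Function.iterate_succ_apply'] at this
  · exact Nat.find_min hex (Nat.sub_lt (Nat.pos_of_ne_zero hpos) one_pos)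

lemma isLeaf_iff_childless {v : V} : T.IsLeaf v ↔ ∀ w, T.parent w = v → w = v :=
  (T.leaf_iff v).symm

lemma leaf_desc_eq {v w : V} (hL : T.IsLeaf v) (h : T.Desc v w) : w = v := by
  obtain ⟨n, hn⟩ := h
  induction n generalizing w with
  | zero => exact hn
  | succ k ih =>
    rw [Function.iterate_succ_apply] at hn
    exact (T.isLeaf_iff_childless.mp hL) w (ih hn)

lemma interior_iff_has_child {v : V} :
    T.Interior v ↔ ∃ c, c ∈ T.children v := by
  rw [XTree.Interior, T.isLeaf_iff_childless]
  push_neg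
  constructor
  · rintro ⟨c, hc, hne⟩; exact ⟨c, hc, hne⟩
  · rintro ⟨c, hc, hne⟩; exact ⟨c, hc, hne⟩

lemma exists_leaf_desc [Fintype V] (v : V) : ∃ x, T.Desc v (T.leaf x) := by
  classical
  suffices h : ∀ n (v : V), ({w | T.Desc v w}).ncard ≤ n → ∃ x, T.Desc v (T.leaf x) by
    exact h _ v le_rfl
  intro n
  induction n with
  | zero =>
    intro v hv
    exfalso
    have : v ∈ {w | T.Desc v w} := T.desc_refl v
    have hpos := Set.ncard_pos (Set.toFinite _) |>.mpr ⟨v, this⟩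
    omega
  | succ n ih =>
    intro v hv
    by_cases hL : T.IsLeaf v
    · obtain ⟨x, hx⟩ := hL
      exact ⟨x, hx ▸ T.desc_refl v⟩
    · obtain ⟨c, hc⟩ := T.interior_iff_has_child.mp hL
      have hsub : {w | T.Desc c w} ⊂ {w | T.Desc v w} := by
        constructor
        · intro w hw
          exact T.desc_trans ⟨1, by simp [hc.1]⟩ hw
        · intro hss
          have : T.Desc c v := hss (T.desc_refl v)
          exact hc.2 (T.desc_antisymm this ⟨1, by simp [hc.1]⟩)
      have hlt := Set.ncard_lt_ncard hsub (Set.toFinite _)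
      obtain ⟨x, hx⟩ := ih c (by omega)
      exact ⟨x, T.desc_trans ⟨1, by simp [hc.1]⟩ hx⟩

lemma lca_exists (u w : V) : ∃ v, T.IsLCA v {u, w} := by
  classical
  have hex : ∃ n, T.Desc (T.parent^[n] u) w := by
    obtain ⟨N, hN⟩ := T.reaches u
    exact ⟨N, hN ▸ T.desc_root w⟩
  set n₀ := Nat.find hex with hn₀
  refine ⟨T.parent^[n₀] u, ⟨?_, ?_⟩⟩
  · rintro z (rfl | rfl)
    · exact ⟨n₀, rfl⟩
    · exact Nat.find_spec hex
  · intro z hz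
    obtain ⟨m, hm⟩ := hz u (Or.inl rfl)
    have hmem : T.Desc (T.parent^[m] u) w := hm ▸ hz w (Or.inr rfl)
    have hle : n₀ ≤ m := Nat.find_le hmem
    exact ⟨m - n₀, by rw [← Function.iterate_add_apply, Nat.sub_add_cancel hle, hm]⟩

lemma lca_unique {v w : V} {S : Set V} (h1 : T.IsLCA v S) (h2 : T.IsLCA w S) : v = w :=
  T.desc_antisymm (h2.2 v h1.1) (h1.2 w h2.1)

end Basic
end XTree
namespace XTree
section Basic2
variable {X V : Type} (T : XTree X V)

lemma mem_leafSet {v : V} {x : X} : x ∈ T.leafSet v ↔ T.Desc v (T.leaf x) := Iff.rfl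

lemma leafSet_mono {u v : V} (h : T.Desc u v) : T.leafSet v ⊆ T.leafSet u :=
  fun _ hx => T.desc_trans h hx

lemma leafSet_leaf (x : X) : T.leafSet (T.leaf x) = {x} := by
  ext y
  simp only [Set.mem_singleton_iff, mem_leafSet]
  constructor
  · intro h
    exact T.leaf_inj (T.leaf_desc_eq ⟨x, rfl⟩ h)
  · rintro rfl; exact T.desc_refl _

lemma leafSet_nonempty [Fintype V] (v : V) : (T.leafSet v).Nonempty :=
  T.exists_leaf_desc v

lemma leafSet_root : T.leafSet T.root = Set.univ := by
  ext x; simp [mem_leafSet, T.desc_root]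

lemma child_mem_leafSet_trans {v c : V} (hc : c ∈ T.children v) {x : X}
    (hx : x ∈ T.leafSet c) : x ∈ T.leafSet v :=
  T.desc_trans ⟨1, by simp [hc.1]⟩ hx

variable {T} (hph : T.IsPhylo)
include hph

lemma interior_two_children {v : V} (hv : T.Interior v) : 2 ≤ (T.children v).ncard := by
  by_cases h : v = T.root
  · exact h ▸ hph.1
  · exact hph.2 v h hv

lemma exists_two_children [Fintype V] {v : V} (hv : T.Interior v) :
    ∃ c₁ c₂, c₁ ∈ T.children v ∧ c₂ ∈ T.children v ∧ c₁ ≠ c₂ := by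
  have := interior_two_children hph hv
  have h1 : 1 < (T.children v).ncard := by omega
  obtain ⟨c₁, c₂, hc₁, hc₂, hne⟩ := (Set.one_lt_ncard_iff (Set.toFinite _)).mp h1
  exact ⟨c₁, c₂, hc₁, hc₂, hne⟩

lemma interior_root [Fintype V] : T.Interior T.root := by
  rw [interior_iff_has_child]
  have := hph.1
  have h1 : 0 < (T.children T.root).ncard := by omega
  obtain ⟨c, hc⟩ := (Set.ncard_pos (Set.toFinite _)).mp h1
  exact ⟨c, hc⟩

omit hph in
lemma _root_.XTree.parent_mem_children (T : XTree X V) {v : V} (hv : v ≠ T.root) : v ∈ T.children (T.parent v) :=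
  ⟨rfl, fun h => hv (T.parent_eq_self_iff.mp h.symm)⟩

lemma leafSet_ssubset [Fintype V] {v : V} (hv : v ≠ T.root) :
    T.leafSet v ⊂ T.leafSet (T.parent v) := by
  have hvc := T.parent_mem_children hv
  have hint : T.Interior (T.parent v) := T.interior_iff_has_child.mpr ⟨v, hvc⟩
  obtain ⟨c₁, c₂, hc₁, hc₂, hne⟩ := exists_two_children hph hint
  -- one of c₁ c₂ differs from v
  have : ∃ c ∈ T.children (T.parent v), c ≠ v := by
    by_cases h : c₁ = v
    · exact ⟨c₂, hc₂, fun hh => hne (h.trans hh.symm)⟩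
    · exact ⟨c₁, hc₁, h⟩
  obtain ⟨c, hc, hcv⟩ := this
  constructor
  · exact T.leafSet_mono (T.parent_desc v)
  · intro hss
    obtain ⟨x, hx⟩ := T.leafSet_nonempty c
    have hx2 : x ∈ T.leafSet v := hss (T.child_mem_leafSet_trans hc hx)
    exact T.sibling_disjoint hc hvc hcv hx hx2

lemma leafSet_ne_univ [Fintype V] {v : V} (hv : v ≠ T.root) :
    T.leafSet v ≠ Set.univ := by
  intro h
  have := (leafSet_ssubset hph hv).2
  rw [h] at this
  exact this (Set.subset_univ _)

lemma leafSet_injective [Fintype V] {v w : V} (h : T.leafSet v = T.leafSet w) : v = w := by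
  obtain ⟨x, hx⟩ := T.leafSet_nonempty v
  have hx' : x ∈ T.leafSet w := h ▸ hx
  have hcomp := T.desc_comparable (v := T.leaf x) hx hx'
  -- wlog via a helper
  have key : ∀ v w : V, T.leafSet v = T.leafSet w → T.Desc w v → v = w := by
    intro v w h hd
    by_contra hne
    by_cases hw : v = T.root
    · subst hw
      exact hne (T.desc_antisymm (T.desc_root w) hd)
    · have := leafSet_ssubset hph hw
      have h2 : T.leafSet (T.parent v) ⊆ T.leafSet w :=
        T.leafSet_mono (T.desc_parent_of_ne hd (Ne.symm hne))
      rw [← h] at h2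
      exact this.2 h2
  rcases hcomp with hd | hd
  · exact (key w v h.symm hd).symm
  · exact key v w h hd

omit hph

lemma desc_strict_subset [Fintype V] {v w : V} (h : T.leafSet v ⊂ T.leafSet w) :
    T.Desc w v ∧ v ≠ w := by
  obtain ⟨x, hx⟩ := T.leafSet_nonempty v
  have hx' : x ∈ T.leafSet w := h.1 hx
  have hne : v ≠ w := fun hh => h.2 (hh ▸ subset_rfl)
  rcases T.desc_comparable (v := T.leaf x) hx hx' with hd | hd
  · exact absurd (T.leafSet_mono hd) h.2
  · exact ⟨hd, hne⟩

lemma lca_of_sep {v c₁ c₂ u w : V} (hc₁ : c₁ ∈ T.children v) (hc₂ : c₂ ∈ T.children v)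
    (hne : c₁ ≠ c₂) (hd1 : T.Desc c₁ u) (hd2 : T.Desc c₂ w) : T.IsLCA v {u, w} := by
  have hvu : T.Desc v u := T.desc_trans ⟨1, by simp [hc₁.1]⟩ hd1
  have hvw : T.Desc v w := T.desc_trans ⟨1, by simp [hc₂.1]⟩ hd2
  refine ⟨by rintro z (rfl | rfl); exacts [hvu, hvw], ?_⟩
  intro z hz
  have hzu := hz u (Or.inl rfl)
  have hzw := hz w (Or.inr rfl)
  rcases T.desc_comparable (v := u) hvu hzu with hd | hd
  · -- hd : Desc v z, z strictly below v
    by_cases hzv : z = v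
    · exact hzv ▸ T.desc_refl v
    · obtain ⟨c, hc, hcz⟩ := T.exists_child_above hd hzv
      -- u below z below c, so c = c₁
      have hcu : T.Desc c u := T.desc_trans hcz hzu
      have hcw : T.Desc c w := T.desc_trans hcz hzw
      have hcc₁ : c = c₁ := by
        by_contra hcc
        exact T.sibling_disjoint hc hc₁ hcc hcu hd1
      subst hcc₁
      exact absurd hcw fun hcw => T.sibling_disjoint hc₁ hc₂ hne hcw hd2
  · exact hd

lemma interior_isLCA [Fintype V] (hph : T.IsPhylo) {v : V} (hv : T.Interior v) :
    ∃ a b, a ≠ b ∧ T.IsLCA v {T.leaf a, T.leaf b} := by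
  obtain ⟨c₁, c₂, hc₁, hc₂, hne⟩ := exists_two_children hph hv
  obtain ⟨a, ha⟩ := T.leafSet_nonempty c₁
  obtain ⟨b, hb⟩ := T.leafSet_nonempty c₂
  refine ⟨a, b, ?_, lca_of_sep hc₁ hc₂ hne ha hb⟩
  rintro rfl
  exact T.sibling_disjoint hc₁ hc₂ hne ha hb

lemma interior_of_two_leaves {v : V} {a b : X} (hab : a ≠ b)
    (ha : a ∈ T.leafSet v) (hb : b ∈ T.leafSet v) : T.Interior v := by
  intro hL
  have := T.leaf_desc_eq hL ha
  have hb' := T.leaf_desc_eq hL hb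
  exact hab (T.leaf_inj (this.trans hb'.symm))

end Basic2

section Heights
variable {X V : Type} {T : XTree X V} {t : V → ℝ}

lemma t_mono (ht : EquidistantProper T t) {u v : V} (h : T.Desc u v) : t v ≤ t u := by
  obtain ⟨n, hn⟩ := h
  rw [← hn]
  clear hn
  induction n with
  | zero => exact le_rfl
  | succ k ih =>
    rw [Function.iterate_succ_apply']
    exact le_trans ih (ht.2.1 _)

lemma t_nonneg [Fintype V] (ht : EquidistantProper T t) (v : V) : 0 ≤ t v := by
  obtain ⟨x, hx⟩ := T.exists_leaf_desc v
  have := t_mono ht hx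
  rwa [ht.1 x] at this

lemma t_strict_child (ht : EquidistantProper T t) {v c : V} (hc : c ∈ T.children v)
    (hint : T.Interior c) : t c < t v := by
  have := ht.2.2 c (T.child_ne_root hc) hint
  rwa [hc.1] at this

/-- ultrametric inequality -/
lemma lca_ultrametric (ht : EquidistantProper T t) {a b c : X} {u w z : V}
    (hu : T.IsLCA u {T.leaf a, T.leaf b}) (hw : T.IsLCA w {T.leaf b, T.leaf c})
    (hz : T.IsLCA z {T.leaf a, T.leaf c}) : t z ≤ max (t u) (t w) := by
  have hub : T.Desc u (T.leaf b) := hu.1 _ (Or.inr rfl)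
  have hwb : T.Desc w (T.leaf b) := hw.1 _ (Or.inl rfl)
  rcases T.desc_comparable hub hwb with hd | hd
  · -- w below u... hd : Desc u w
    have haw : T.Desc u (T.leaf a) := hu.1 _ (Or.inl rfl)
    have hcw : T.Desc u (T.leaf c) := T.desc_trans hd (hw.1 _ (Or.inr rfl))
    have := hz.2 u (by rintro y (rfl | rfl); exacts [haw, hcw])
    exact le_trans (t_mono ht this) (le_max_left _ _)
  · have hcw : T.Desc w (T.leaf c) := hw.1 _ (Or.inr rfl)
    have haw : T.Desc w (T.leaf a) := T.desc_trans hd (hu.1 _ (Or.inl rfl))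
    have := hz.2 w (by rintro y (rfl | rfl); exacts [haw, hcw])
    exact le_trans (t_mono ht this) (le_max_right _ _)

/-- the canonical ncard-based equidistant proper weighting -/
lemma ncardWeight_proper [Fintype X] [Fintype V] (hph : T.IsPhylo) :
    EquidistantProper T (fun v => ((T.leafSet v).ncard : ℝ) - 1) := by
  refine ⟨?_, ?_, ?_⟩
  · intro x; simp [T.leafSet_leaf]
  · intro v
    have : T.leafSet v ⊆ T.leafSet (T.parent v) := T.leafSet_mono (T.parent_desc v)
    have := Set.ncard_le_ncard this (Set.toFinite _)
    simp only
    have : ((T.leafSet v).ncard : ℝ) ≤ ((T.leafSet (T.parent v)).ncard : ℝ) := by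
      exact_mod_cast this
    linarith
  · intro v hv _
    have hss := leafSet_ssubset hph hv
    have := Set.ncard_lt_ncard hss (Set.toFinite _)
    have : ((T.leafSet v).ncard : ℝ) < ((T.leafSet (T.parent v)).ncard : ℝ) := by
      exact_mod_cast this
    simp only
    linarith

end Heights
end XTree
namespace XTree
section LCA
variable {X V : Type} (T : XTree X V)

noncomputable def lcaF (u w : V) : V := Classical.choose (T.lca_exists u w)

lemma lcaF_spec (u w : V) : T.IsLCA (T.lcaF u w) {u, w} :=
  Classical.choose_spec (T.lca_exists u w)

lemma lcaF_eq {u w v : V} (h : T.IsLCA v {u, w}) : T.lcaF u w = v :=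
  T.lca_unique (T.lcaF_spec u w) h

lemma isLCA_pair_comm {u w v : V} (h : T.IsLCA v {u, w}) : T.IsLCA v {w, u} := by
  rwa [Set.pair_comm]

lemma lcaF_comm (u w : V) : T.lcaF u w = T.lcaF w u :=
  T.lcaF_eq (T.isLCA_pair_comm (T.lcaF_spec w u))

lemma lcaF_self (u : V) : T.lcaF u u = u := by
  apply T.lcaF_eq
  constructor
  · rintro z (rfl | rfl) <;> exact T.desc_refl _
  · intro z hz; exact hz u (Or.inl rfl)

lemma lcaF_desc_left (u w : V) : T.Desc (T.lcaF u w) u :=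
  (T.lcaF_spec u w).1 u (Or.inl rfl)

lemma lcaF_desc_right (u w : V) : T.Desc (T.lcaF u w) w :=
  (T.lcaF_spec u w).1 w (Or.inr rfl)

lemma lcaF_min {u w z : V} (h1 : T.Desc z u) (h2 : T.Desc z w) : T.Desc z (T.lcaF u w) :=
  (T.lcaF_spec u w).2 z (by rintro y (rfl | rfl); exacts [h1, h2])

end LCA

/-- height of the lca of two leaf labels -/
noncomputable def hD {X V : Type} (T : XTree X V) (t : V → ℝ) (a b : X) : ℝ :=
  t (T.lcaF (T.leaf a) (T.leaf b))

section HD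
variable {X V : Type} {T : XTree X V} {t : V → ℝ}

lemma hD_comm (a b : X) : hD T t a b = hD T t b a := by
  rw [hD, hD, T.lcaF_comm]

lemma hD_self (ht : EquidistantProper T t) (a : X) : hD T t a a = 0 := by
  rw [hD, T.lcaF_self]; exact ht.1 a

lemma hD_nonneg [Fintype V] (ht : EquidistantProper T t) (a b : X) : 0 ≤ hD T t a b :=
  t_nonneg ht _

lemma hD_ultra (ht : EquidistantProper T t) (a b c : X) :
    hD T t a c ≤ max (hD T t a b) (hD T t b c) :=
  lca_ultrametric ht (T.lcaF_spec _ _) (T.lcaF_spec _ _) (T.lcaF_spec _ _)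

/-- K2: the cluster below the lca of a, b is cut out by the distance function. -/
lemma leafSet_lcaF [Fintype V] (hph : T.IsPhylo) (ht : EquidistantProper T t)
    {a b : X} (hab : a ≠ b) :
    T.leafSet (T.lcaF (T.leaf a) (T.leaf b)) = {x | hD T t x a ≤ hD T t a b} := by
  set v := T.lcaF (T.leaf a) (T.leaf b) with hv
  have hva : a ∈ T.leafSet v := T.lcaF_desc_left _ _
  have hvb : b ∈ T.leafSet v := T.lcaF_desc_right _ _
  have hint : T.Interior v := interior_of_two_leaves hab hva hvb
  ext x
  simp only [Set.mem_setOf_eq]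
  constructor
  · intro hx
    have : T.Desc v (T.lcaF (T.leaf x) (T.leaf a)) := T.lcaF_min hx hva
    exact t_mono ht this
  · intro hle
    by_contra hx
    set z := T.lcaF (T.leaf x) (T.leaf a) with hz
    have hza : T.Desc z (T.leaf a) := T.lcaF_desc_right _ _
    have hcomp := T.desc_comparable (v := T.leaf a) (T.mem_leafSet.mp hva) hza
    have hzv : T.Desc z v ∧ z ≠ v := by
      rcases hcomp with hd | hd
      · exfalso
        exact hx (T.desc_trans hd (T.lcaF_desc_left (T.leaf x) (T.leaf a)))
      · refine ⟨hd, ?_⟩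
        intro heq
        apply hx
        rw [mem_leafSet, ← heq]
        exact T.lcaF_desc_left (T.leaf x) (T.leaf a)
    have hvroot : v ≠ T.root := by
      intro heq
      apply hx
      rw [mem_leafSet, heq]
      exact T.desc_root _
    have h1 : t v < t (T.parent v) := ht.2.2 v hvroot hint
    have h2 : t (T.parent v) ≤ t z :=
      t_mono ht (T.desc_parent_of_ne hzv.1 hzv.2)
    rw [hD, hD, ← hz, ← hv] at hle
    linarith

end HD

section Equivalence
variable {X V V' : Type} {T : XTree X V} {T' : XTree X V'}

lemma treeEquiv_leafSet (h : TreeEquiv T T') :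
    ∀ u : V, ∃ u' : V', T'.leafSet u' = T.leafSet u := by
  obtain ⟨φ, hroot, hpar, hleaf⟩ := h
  have hiter : ∀ (n : ℕ) (v : V), φ (T.parent^[n] v) = T'.parent^[n] (φ v) := by
    intro n
    induction n with
    | zero => intro v; rfl
    | succ k ih =>
      intro v
      rw [Function.iterate_succ_apply, Function.iterate_succ_apply, ← hpar, ih]
  have hdesc : ∀ u w : V, T.Desc u w ↔ T'.Desc (φ u) (φ w) := by
    intro u w
    constructor
    · rintro ⟨n, hn⟩; exact ⟨n, by rw [← hiter, hn]⟩
    · rintro ⟨n, hn⟩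
      refine ⟨n, ?_⟩
      apply φ.injective
      rw [hiter, hn]
  intro u
  refine ⟨φ u, ?_⟩
  ext x
  simp only [mem_leafSet]
  rw [← hleaf x, ← hdesc]

lemma treeEquiv_symm (h : TreeEquiv T T') : TreeEquiv T' T := by
  obtain ⟨φ, hroot, hpar, hleaf⟩ := h
  refine ⟨φ.symm, by simp [← hroot], ?_, ?_⟩
  · intro v
    apply φ.injective
    simp [hpar]
  · intro x
    apply φ.injective
    simp [hleaf]

/-- M1: if the cluster families coincide, the trees are equivalent. -/
lemma treeEquiv_of_clusters [Fintype V] [Fintype V']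
    (hph : T.IsPhylo) (hph' : T'.IsPhylo)
    (h₁ : ∀ v : V, ∃ v' : V', T'.leafSet v' = T.leafSet v)
    (h₂ : ∀ v' : V', ∃ v : V, T.leafSet v = T'.leafSet v') :
    TreeEquiv T T' := by
  classical
  choose f hf using h₁
  have hinj : Function.Injective f := fun u v h =>
    leafSet_injective hph (by rw [← hf u, ← hf v, h])
  have hsurj : Function.Surjective f := by
    intro v'
    obtain ⟨v, hv⟩ := h₂ v'
    exact ⟨v, leafSet_injective hph' (by rw [hf v, hv])⟩
  refine ⟨Equiv.ofBijective f ⟨hinj, hsurj⟩, ?_, ?_, ?_⟩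
  · show f T.root = T'.root
    apply leafSet_injective hph'
    rw [hf T.root, T.leafSet_root, T'.leafSet_root]
  · intro v
    show f (T.parent v) = T'.parent (f v)
    by_cases hvroot : v = T.root
    · subst hvroot
      rw [T.parent_root]
      have : f T.root = T'.root := by
        apply leafSet_injective hph'
        rw [hf T.root, T.leafSet_root, T'.leafSet_root]
      rw [this, T'.parent_root]
    · have hfvroot : f v ≠ T'.root := by
        intro h
        apply leafSet_ne_univ hph hvroot
        rw [← hf v, h, T'.leafSet_root]
      apply leafSet_injective hph'
      have hB : T'.leafSet (f v) ⊂ T'.leafSet (f (T.parent v)) := by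
        rw [hf v, hf (T.parent v)]
        exact leafSet_ssubset hph hvroot
      obtain ⟨hd', hne'⟩ := desc_strict_subset hB
      have h5 : T'.leafSet (T'.parent (f v)) ⊆ T'.leafSet (f (T.parent v)) :=
        T'.leafSet_mono (T'.desc_parent_of_ne hd' (Ne.symm hne'))
      obtain ⟨u, hu⟩ := h₂ (T'.parent (f v))
      have h3 : T.leafSet v ⊂ T.leafSet u := by
        rw [hu, ← hf v]
        exact leafSet_ssubset hph' hfvroot
      obtain ⟨hd, hne⟩ := desc_strict_subset h3
      have h4 : T.leafSet (T.parent v) ⊆ T.leafSet u :=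
        T.leafSet_mono (T.desc_parent_of_ne hd (Ne.symm hne))
      apply Set.Subset.antisymm
      · rw [hf (T.parent v)]
        calc T.leafSet (T.parent v) ⊆ T.leafSet u := h4
        _ = T'.leafSet (T'.parent (f v)) := hu
      · exact h5
  · intro x
    show f (T.leaf x) = T'.leaf x
    apply leafSet_injective hph'
    rw [hf (T.leaf x), T.leafSet_leaf, T'.leafSet_leaf]

end Equivalence
end XTree
namespace XTree

/-- K1: if every child-edge graph is a clique and the two weighted trees agree on the
lca-heights of all cords of `L`, then they agree on lca-heights of all pairs. -/
lemma hD_eq_of_lasso {X V V' : Type} [Fintype X] [Fintype V] [Fintype V']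
    {T : XTree X V} {T' : XTree X V'} {t : V → ℝ} {t' : V' → ℝ}
    (ht : EquidistantProper T t) (ht' : EquidistantProper T' t')
    {L : Set (Set X)} (hlasso : T.IsTopoLasso L)
    (hagree : ∀ a b : X, a ≠ b → ({a, b} : Set X) ∈ L →
      ∀ (v : V) (v' : V'), T.IsLCA v {T.leaf a, T.leaf b} →
        T'.IsLCA v' {T'.leaf a, T'.leaf b} → t v = t' v') :
    ∀ a b : X, hD T t a b = hD T' t' a b := by
  suffices h : ∀ (n : ℕ) (a b : X),
      (T.leafSet (T.lcaF (T.leaf a) (T.leaf b))).ncard ≤ n → hD T t a b = hD T' t' a b by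
    exact fun a b => h _ a b le_rfl
  intro n
  induction n with
  | zero =>
    intro a b hcard
    exfalso
    have := (T.leafSet_nonempty (T.lcaF (T.leaf a) (T.leaf b))).ncard_pos (Set.toFinite _)
    omega
  | succ n ih =>
    intro a b hcard
    by_cases hab : a = b
    · subst hab; rw [hD_self ht, hD_self ht']
    · have hva : T.Desc (T.lcaF (T.leaf a) (T.leaf b)) (T.leaf a) := T.lcaF_desc_left _ _
      have hvb : T.Desc (T.lcaF (T.leaf a) (T.leaf b)) (T.leaf b) := T.lcaF_desc_right _ _
      generalize hvdef : T.lcaF (T.leaf a) (T.leaf b) = v at *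
      have hint : T.Interior v := interior_of_two_leaves hab hva hvb
      have hlav : T.leaf a ≠ v := fun h => hint ⟨a, h⟩
      have hlbv : T.leaf b ≠ v := fun h => hint ⟨b, h⟩
      obtain ⟨c₁, hc₁, hc₁a⟩ := T.exists_child_above hva hlav
      obtain ⟨c₂, hc₂, hc₂b⟩ := T.exists_child_above hvb hlbv
      have hvlca : T.IsLCA v {T.leaf a, T.leaf b} := by
        rw [← hvdef]; exact T.lcaF_spec _ _
      have hc12 : c₁ ≠ c₂ := by
        rintro rfl
        have h1 : T.Desc c₁ v := hvlca.2 c₁ (by rintro y (rfl | rfl); exacts [hc₁a, hc₂b])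
        exact hc₁.2 (T.desc_antisymm h1 ⟨1, by simp [hc₁.1]⟩)
      obtain ⟨a₀, b₀, ha₀, hb₀, hmem⟩ := hlasso v c₁ c₂ hc₁ hc₂ hc12
      have ha₀b₀ : a₀ ≠ b₀ := by
        rintro rfl
        exact T.sibling_disjoint hc₁ hc₂ hc12 ha₀ hb₀
      have hlca₀ : T.IsLCA v {T.leaf a₀, T.leaf b₀} := lca_of_sep hc₁ hc₂ hc12 ha₀ hb₀
      have hkey : t v = hD T' t' a₀ b₀ :=
        hagree a₀ b₀ ha₀b₀ hmem v _ hlca₀ (T'.lcaF_spec _ _)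
      -- the per-side claim
      have side : ∀ (c : V) (p q y : X), c ∈ T.children v → T.Desc c (T.leaf p) →
          q ∈ T.leafSet c → y ∈ T.leafSet v → y ∉ T.leafSet c →
          hD T t p q = hD T' t' p q ∧ hD T t p q ≤ t v ∧ (0 < t v → hD T t p q < t v) := by
        intro c p q y hc hcp hq hy hyc
        by_cases hcleaf : T.IsLeaf c
        · have hpq : p = q := by
            have h1 := T.leaf_desc_eq hcleaf hcp
            have h2 := T.leaf_desc_eq hcleaf hq
            exact T.leaf_inj (h1.trans h2.symm)
          subst hpq
          rw [hD_self ht, hD_self ht']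
          refine ⟨rfl, t_nonneg ht v, fun h => h⟩
        · have hcz : T.Desc c (T.lcaF (T.leaf p) (T.leaf q)) := T.lcaF_min hcp hq
          have hzsub : T.leafSet (T.lcaF (T.leaf p) (T.leaf q)) ⊆ T.leafSet c :=
            T.leafSet_mono hcz
          have hss : T.leafSet (T.lcaF (T.leaf p) (T.leaf q)) ⊂ T.leafSet v := by
            refine ⟨subset_trans hzsub (fun x hx => T.child_mem_leafSet_trans hc hx), ?_⟩
            intro hsup
            exact hyc (hzsub (hsup hy))
          have hlt := Set.ncard_lt_ncard hss (Set.toFinite _)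
          have heq : hD T t p q = hD T' t' p q := ih p q (by omega)
          have hb1 : hD T t p q ≤ t c := t_mono ht hcz
          have hb2 : t c < t v := t_strict_child ht hc hcleaf
          exact ⟨heq, by rw [hD] at hb1 ⊢; linarith, fun _ => by rw [hD] at hb1 ⊢; linarith⟩
      obtain ⟨heqA, hleA, hltA⟩ := side c₁ a a₀ b hc₁ hc₁a ha₀ (T.mem_leafSet.mpr hvb)
        (fun h => T.sibling_disjoint hc₁ hc₂ hc12 h hc₂b)
      obtain ⟨heqB, hleB, hltB⟩ := side c₂ b b₀ a hc₂ hc₂b hb₀ (T.mem_leafSet.mpr hva)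
        (fun h => T.sibling_disjoint hc₂ hc₁ (Ne.symm hc12) h hc₁a)
      have hgoal : hD T t a b = t v := by rw [hD, hvdef]
      rw [hgoal]
      -- upper bound
      have hupper : hD T' t' a b ≤ t v := by
        have h1 : hD T' t' a b ≤ max (hD T' t' a a₀) (hD T' t' a₀ b) := hD_ultra ht' a a₀ b
        have h2 : hD T' t' a₀ b ≤ max (hD T' t' a₀ b₀) (hD T' t' b₀ b) := hD_ultra ht' a₀ b₀ b
        have e1 : hD T' t' a a₀ ≤ t v := by rw [← heqA]; exact hleA
        have e2 : hD T' t' a₀ b₀ ≤ t v := le_of_eq hkey.symm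
        have e3 : hD T' t' b₀ b ≤ t v := by rw [hD_comm, ← heqB]; exact hleB
        calc hD T' t' a b ≤ _ := h1
        _ ≤ max (hD T' t' a a₀) (max (hD T' t' a₀ b₀) (hD T' t' b₀ b)) :=
          max_le_max le_rfl h2
        _ ≤ t v := by
          apply max_le e1 (max_le e2 e3)
      -- lower bound
      rcases le_or_gt (t v) 0 with hv0 | hv0
      · have hz : t v = 0 := le_antisymm hv0 (t_nonneg ht v)
        have := hD_nonneg ht' a b
        linarith
      · have h1 : hD T' t' a₀ a < t v := by rw [hD_comm, ← heqA]; exact hltA hv0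
        have h2 : hD T' t' b b₀ < t v := by rw [← heqB]; exact hltB hv0
        have hm : t v ≤ max (hD T' t' a₀ a) (hD T' t' a b₀) := by
          rw [hkey]; exact hD_ultra ht' a₀ a b₀
        have hm2 : hD T' t' a b₀ ≤ max (hD T' t' a b) (hD T' t' b b₀) := hD_ultra ht' a b b₀
        by_contra hne
        have hlt : hD T' t' a b < t v := lt_of_le_of_ne hupper fun h => hne h.symm
        have : max (hD T' t' a₀ a) (hD T' t' a b₀) < t v :=
          max_lt h1 (lt_of_le_of_lt hm2 (max_lt hlt h2))
        linarith
end XTree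
namespace XTree

lemma clusters_eq_of_lasso {X V V' : Type} [Fintype X] [Fintype V] [Fintype V']
    {T : XTree X V} {T' : XTree X V'} {t : V → ℝ} {t' : V' → ℝ}
    (hph : T.IsPhylo) (hph' : T'.IsPhylo)
    (ht : EquidistantProper T t) (ht' : EquidistantProper T' t')
    {L : Set (Set X)} (hlasso : T.IsTopoLasso L)
    (hagree : ∀ a b : X, a ≠ b → ({a, b} : Set X) ∈ L →
      ∀ (v : V) (v' : V'), T.IsLCA v {T.leaf a, T.leaf b} →
        T'.IsLCA v' {T'.leaf a, T'.leaf b} → t v = t' v') :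
    TreeEquiv T T' := by
  have hK := hD_eq_of_lasso ht ht' hlasso hagree
  apply treeEquiv_of_clusters hph hph'
  · intro v
    by_cases hint : T.Interior v
    · obtain ⟨a, b, hab, hlca⟩ := interior_isLCA hph hint
      refine ⟨T'.lcaF (T'.leaf a) (T'.leaf b), ?_⟩
      have h1 := leafSet_lcaF hph' ht' hab
      have h2 := leafSet_lcaF hph ht hab
      rw [T.lcaF_eq hlca] at h2
      rw [h1, h2]
      ext x
      simp only [Set.mem_setOf_eq, hK]
    · have hL : T.IsLeaf v := not_not.mp hint
      obtain ⟨x, hx⟩ := hL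
      exact ⟨T'.leaf x, by rw [← hx, T.leafSet_leaf, T'.leafSet_leaf]⟩
  · intro v'
    by_cases hint : T'.Interior v'
    · obtain ⟨a, b, hab, hlca⟩ := interior_isLCA hph' hint
      refine ⟨T.lcaF (T.leaf a) (T.leaf b), ?_⟩
      have h1 := leafSet_lcaF hph' ht' hab
      have h2 := leafSet_lcaF hph ht hab
      rw [T'.lcaF_eq hlca] at h1
      rw [h1, h2]
      ext x
      simp only [Set.mem_setOf_eq, hK]
    · have hL : T'.IsLeaf v' := not_not.mp hint
      obtain ⟨x, hx⟩ := hL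
      exact ⟨T.leaf x, by rw [← hx, T.leafSet_leaf, T'.leafSet_leaf]⟩

end XTree
lemma two_le_ncard_of_mem {α : Type*} [Finite α] {S : Set α} {a b : α}
    (ha : a ∈ S) (hb : b ∈ S) (hab : a ≠ b) : 2 ≤ S.ncard := by
  have : 1 < S.ncard := (Set.one_lt_ncard_iff (Set.toFinite _)).mpr ⟨a, b, ha, hb, hab⟩
  omega

namespace XTree

lemma counterexample_A {X V : Type} [Fintype X] [Fintype V] (T : XTree X V) (hph : T.IsPhylo)
    {L : Set (Set X)} {v c₁ c₂ c₃ : V}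
    (hc₁ : c₁ ∈ T.children v) (hc₂ : c₂ ∈ T.children v) (hc₃ : c₃ ∈ T.children v)
    (h12 : c₁ ≠ c₂) (h13 : c₃ ≠ c₁) (h23 : c₃ ≠ c₂)
    (hno : ∀ a b : X, a ∈ T.leafSet c₁ → b ∈ T.leafSet c₂ → ({a, b} : Set X) ∉ L) :
    ∃ (T' : XTree X (Option V)) (t : V → ℝ) (t' : Option V → ℝ),
      T'.IsPhylo ∧ EquidistantProper T t ∧ EquidistantProper T' t' ∧
      (∀ a b : X, a ≠ b → ({a, b} : Set X) ∈ L →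
        ∀ (w : V) (w' : Option V), T.IsLCA w {T.leaf a, T.leaf b} →
          T'.IsLCA w' {T'.leaf a, T'.leaf b} → t w = t' w') ∧
      ¬ TreeEquiv T T' := by
  classical
  set P : Option V → Option V := fun o =>
    o.elim (some v) (fun w => if w = c₁ ∨ w = c₂ then none else some (T.parent w)) with hPdef
  have hPnone : P none = some v := rfl
  have hPc : ∀ w : V, (w = c₁ ∨ w = c₂) → P (some w) = none := by
    intro w hw; simp [hPdef, hw]
  have hPother : ∀ w : V, ¬(w = c₁ ∨ w = c₂) → P (some w) = some (T.parent w) := by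
    intro w hw; simp [hPdef, hw]
  have hc₁v : c₁ ≠ v := hc₁.2
  have hc₂v : c₂ ≠ v := hc₂.2
  have hrootc : ¬(T.root = c₁ ∨ T.root = c₂) := by
    rintro (rfl | rfl)
    exacts [T.child_ne_root hc₁ rfl, T.child_ne_root hc₂ rfl]
  -- one simulation step
  have hstep : ∀ w : V, ∃ k, 0 < k ∧ P^[k] (some w) = some (T.parent w) := by
    intro w
    by_cases hw : w = c₁ ∨ w = c₂
    · refine ⟨2, by omega, ?_⟩
      have h1 : T.parent w = v := by rcases hw with rfl | rfl; exacts [hc₁.1, hc₂.1]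
      rw [Function.iterate_succ_apply, hPc w hw, Function.iterate_one, hPnone, h1]
    · exact ⟨1, one_pos, by rw [Function.iterate_one, hPother w hw]⟩
  have hlift : ∀ (n : ℕ) (w : V), ∃ m, P^[m] (some w) = some (T.parent^[n] w) := by
    intro n
    induction n with
    | zero => exact fun w => ⟨0, rfl⟩
    | succ k ih =>
      intro w
      obtain ⟨k₁, _, hk₁⟩ := hstep w
      obtain ⟨m, hm⟩ := ih (T.parent w)
      refine ⟨m + k₁, ?_⟩
      rw [Function.iterate_add_apply, hk₁, hm, ← Function.iterate_succ_apply]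
  -- descending back
  have hback : ∀ (n : ℕ) (u w : V), P^[n] (some w) = some u → T.Desc u w := by
    intro n
    induction n using Nat.strong_induction_on with
    | _ n ih =>
      intro u w hn
      match n, hn with
      | 0, hn => exact ⟨0, (Option.some_injective V hn)⟩
      | (k+1), hn =>
        rw [Function.iterate_succ_apply] at hn
        by_cases hw : w = c₁ ∨ w = c₂
        · rw [hPc w hw] at hn
          match k, hn with
          | 0, hn => exact absurd hn (by simp)
          | (j+1), hn =>
            rw [Function.iterate_succ_apply, hPnone] at hn
            have := ih j (by omega) u v hn
            have h1 : T.parent w = v := by rcases hw with rfl | rfl; exacts [hc₁.1, hc₂.1]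
            exact T.desc_of_desc_parent (h1 ▸ this)
        · rw [hPother w hw] at hn
          exact T.desc_of_desc_parent (ih k (by omega) u (T.parent w) hn)
  have hbacknone : ∀ (n : ℕ) (w : V), P^[n] (some w) = none → T.Desc c₁ w ∨ T.Desc c₂ w := by
    intro n
    induction n using Nat.strong_induction_on with
    | _ n ih =>
      intro w hn
      match n, hn with
      | 0, hn => exact absurd hn (by simp)
      | (k+1), hn =>
        rw [Function.iterate_succ_apply] at hn
        by_cases hw : w = c₁ ∨ w = c₂
        · rcases hw with rfl | rfl
          exacts [Or.inl (T.desc_refl w), Or.inr (T.desc_refl w)]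
        · rw [hPother w hw] at hn
          rcases ih k (by omega) (T.parent w) hn with h | h
          exacts [Or.inl (T.desc_of_desc_parent h), Or.inr (T.desc_of_desc_parent h)]
  have hvnotleaf : v ∉ Set.range T.leaf := by
    intro hv
    exact hc₃.2 ((T.leaf_iff v).mpr hv c₃ hc₃.1)
  -- build the tree
  set T' : XTree X (Option V) :=
    { root := some T.root
      parent := P
      parent_root := by rw [hPother T.root hrootc, T.parent_root]
      reaches := by
        intro o
        match o with
        | none =>
          obtain ⟨N, hN⟩ := T.reaches v
          obtain ⟨m, hm⟩ := hlift N v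
          exact ⟨m + 1, by rw [Function.iterate_add_apply, Function.iterate_one, hPnone, hm, hN]⟩
        | some w =>
          obtain ⟨N, hN⟩ := T.reaches w
          obtain ⟨m, hm⟩ := hlift N w
          exact ⟨m, by rw [hm, hN]⟩
      leaf := fun x => some (T.leaf x)
      leaf_inj := fun x y h => T.leaf_inj (Option.some_injective V h)
      leaf_iff := by
        intro o
        match o with
        | none =>
          simp only [Set.mem_range]
          constructor
          · intro h
            exact absurd (h (some c₁) (hPc c₁ (Or.inl rfl))) (by simp)
          · rintro ⟨x, hx⟩; exact absurd hx (by simp)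
        | some w =>
          have hrange : (some w ∈ Set.range fun x => some (T.leaf x)) ↔ w ∈ Set.range T.leaf := by
            constructor
            · rintro ⟨x, hx⟩; exact ⟨x, Option.some_injective V hx⟩
            · rintro ⟨x, hx⟩; exact ⟨x, by simp [hx]⟩
          rw [hrange]
          by_cases hwv : w = v
          · subst hwv
            constructor
            · intro h
              exfalso
              have h3 : P (some c₃) = some w := by
                rw [hPother c₃ (by tauto), hc₃.1]
              exact hc₃.2 (Option.some_injective V (h (some c₃) h3))
            · intro h; exact absurd h hvnotleaf
          · rw [← T.leaf_iff w]
            constructor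
            · intro h w'' hw''
              have hw''c : ¬(w'' = c₁ ∨ w'' = c₂) := by
                rintro (rfl | rfl)
                · exact hwv (hw''.symm.trans hc₁.1)
                · exact hwv (hw''.symm.trans hc₂.1)
              have := h (some w'') (by rw [hPother w'' hw''c, hw''])
              exact Option.some_injective V this
            · intro h o' ho'
              match o' with
              | none =>
                rw [hPnone] at ho'
                exact absurd (Option.some_injective V ho').symm hwv
              | some u =>
                by_cases hu : u = c₁ ∨ u = c₂
                · rw [hPc u hu] at ho'; exact absurd ho' (by simp)
                · rw [hPother u hu] at ho'
                  rw [h u (Option.some_injective V ho')] } with hT'def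
  have hT'parent : T'.parent = P := rfl
  have hT'leaf : ∀ x, T'.leaf x = some (T.leaf x) := fun _ => rfl
  -- descent correspondence
  have hdesc1 : ∀ {u w : V}, T.Desc u w → T'.Desc (some u) (some w) := by
    rintro u w ⟨n, hn⟩
    obtain ⟨m, hm⟩ := hlift n w
    exact ⟨m, by rw [hT'parent, hm, hn]⟩
  have hdesc2 : ∀ {u w : V}, T'.Desc (some u) (some w) → T.Desc u w := by
    rintro u w ⟨n, hn⟩
    exact hback n u w hn
  have hdescnone : ∀ {w : V}, T'.Desc none (some w) ↔ (T.Desc c₁ w ∨ T.Desc c₂ w) := by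
    intro w
    constructor
    · rintro ⟨n, hn⟩; exact hbacknone n w hn
    · rintro (h | h)
      · exact T'.desc_trans (u := none) ⟨1, by rw [hT'parent, Function.iterate_one, hPc c₁ (Or.inl rfl)]⟩ (hdesc1 h)
      · exact T'.desc_trans (u := none) ⟨1, by rw [hT'parent, Function.iterate_one, hPc c₂ (Or.inr rfl)]⟩ (hdesc1 h)
  have hleafSet : ∀ w : V, T'.leafSet (some w) = T.leafSet w := by
    intro w
    ext x
    constructor
    · intro hx; exact hdesc2 hx
    · intro hx; exact hdesc1 hx
  have hleafSetnone : T'.leafSet none = T.leafSet c₁ ∪ T.leafSet c₂ := by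
    ext x
    simp only [mem_leafSet, Set.mem_union, hT'leaf]
    exact hdescnone
  -- interior correspondence
  have hint : ∀ w : V, T'.Interior (some w) → T.Interior w := by
    intro w hw hcon
    apply hw
    obtain ⟨x, hx⟩ := hcon
    exact ⟨x, by rw [hT'leaf, hx]⟩
  -- phylo
  have hph' : T'.IsPhylo := by
    have hchild : ∀ w : V, T.Interior w → 2 ≤ (T'.children (some w)).ncard := by
      intro w hw
      by_cases hwv : w = v
      · subst hwv
        apply two_le_ncard_of_mem (a := none) (b := some c₃)
        · exact ⟨hPnone, by simp⟩
        · refine ⟨?_, by simp [hc₃.2]⟩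
          show P (some c₃) = some w
          rw [hPother c₃ (by tauto), hc₃.1]
        · simp
      · obtain ⟨d₁, d₂, hd₁, hd₂, hdne⟩ := exists_two_children hph hw
        have hmap : ∀ d, d ∈ T.children w → some d ∈ T'.children (some w) := by
          intro d hd
          have hdc : ¬(d = c₁ ∨ d = c₂) := by
            rintro (rfl | rfl)
            · exact hwv (hd.1.symm.trans hc₁.1)
            · exact hwv (hd.1.symm.trans hc₂.1)
          refine ⟨?_, by simp [hd.2]⟩
          show P (some d) = some w
          rw [hPother d hdc, hd.1]
        exact two_le_ncard_of_mem (hmap d₁ hd₁) (hmap d₂ hd₂) (by simp [hdne])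
    constructor
    · exact hchild T.root (interior_root hph)
    · intro o honeroot hoint
      match o with
      | none =>
        apply two_le_ncard_of_mem (a := some c₁) (b := some c₂)
        · exact ⟨hPc c₁ (Or.inl rfl), by simp⟩
        · exact ⟨hPc c₂ (Or.inr rfl), by simp⟩
        · simp [h12]
      | some w => exact hchild w (hint w hoint)
  refine ⟨T', fun w => ((T.leafSet w).ncard : ℝ) - 1, fun o => ((T'.leafSet o).ncard : ℝ) - 1,
    hph', ncardWeight_proper hph, ncardWeight_proper hph', ?_, ?_⟩
  · -- agreement on cords of L
    intro a b hab hmem w w' hw hw'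
    have hlca' : T'.IsLCA (some w) {T'.leaf a, T'.leaf b} := by
      constructor
      · rintro z (rfl | rfl)
        · exact hdesc1 (hw.1 _ (Or.inl rfl))
        · exact hdesc1 (hw.1 _ (Or.inr rfl))
      · intro z hz
        have hza := hz _ (Or.inl rfl)
        have hzb := hz _ (Or.inr rfl)
        match z with
        | some z =>
          have h1 : T.Desc z (T.leaf a) := hdesc2 hza
          have h2 : T.Desc z (T.leaf b) := hdesc2 hzb
          exact hdesc1 (hw.2 z (by rintro y (rfl | rfl); exacts [h1, h2]))
        | none =>
          rw [hT'leaf] at hza hzb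
          rcases hdescnone.mp hza with ha | ha <;> rcases hdescnone.mp hzb with hb | hb
          · exact hdescnone.mpr (Or.inl (hw.2 c₁ (by rintro y (rfl | rfl); exacts [ha, hb])))
          · exact absurd hmem (hno a b ha hb)
          · exact absurd hmem (by rw [Set.pair_comm]; exact hno b a hb ha)
          · exact hdescnone.mpr (Or.inr (hw.2 c₂ (by rintro y (rfl | rfl); exacts [ha, hb])))
    have heq : w' = some w := T'.lca_unique hw' hlca'
    subst heq
    show ((T.leafSet w).ncard : ℝ) - 1 = ((T'.leafSet (some w)).ncard : ℝ) - 1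
    rw [hleafSet]
  · -- not equivalent
    intro hequiv
    obtain ⟨u, hu⟩ := treeEquiv_leafSet (treeEquiv_symm hequiv) none
    rw [hleafSetnone] at hu
    obtain ⟨a₁, ha₁⟩ := T.leafSet_nonempty c₁
    obtain ⟨a₂, ha₂⟩ := T.leafSet_nonempty c₂
    obtain ⟨a₃, ha₃⟩ := T.leafSet_nonempty c₃
    have ha₁u : a₁ ∈ T.leafSet u := by rw [hu]; exact Or.inl ha₁
    have hcomp := T.desc_comparable (v := T.leaf a₁) (T.mem_leafSet.mp ha₁u)
      (T.child_mem_leafSet_trans hc₁ ha₁)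
    have ha₃nc : a₃ ∉ T.leafSet c₁ ∪ T.leafSet c₂ := by
      rintro (h | h)
      · exact T.sibling_disjoint hc₃ hc₁ h13 ha₃ h
      · exact T.sibling_disjoint hc₃ hc₂ h23 ha₃ h
    rcases hcomp with hd | hd
    · -- v below u : leafSet v ⊆ leafSet u
      have : a₃ ∈ T.leafSet u := T.leafSet_mono hd (T.child_mem_leafSet_trans hc₃ ha₃)
      rw [hu] at this
      exact ha₃nc this
    · -- u below v
      by_cases huv : u = v
      · have : a₃ ∈ T.leafSet u := huv ▸ T.child_mem_leafSet_trans hc₃ ha₃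
        rw [hu] at this
        exact ha₃nc this
      · obtain ⟨c, hc, hcu⟩ := T.exists_child_above hd huv
        have hca₁ : T.Desc c (T.leaf a₁) := T.desc_trans hcu (T.mem_leafSet.mp ha₁u)
        have hcc₁ : c = c₁ := by
          by_contra hcc
          exact T.sibling_disjoint hc hc₁ hcc hca₁ ha₁
        have ha₂u : a₂ ∈ T.leafSet u := by rw [hu]; exact Or.inr ha₂
        have hca₂ : T.Desc c (T.leaf a₂) := T.desc_trans hcu (T.mem_leafSet.mp ha₂u)
        have hcc₂ : c = c₂ := by
          by_contra hcc
          exact T.sibling_disjoint hc hc₂ hcc hca₂ ha₂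
        exact h12 (hcc₁ ▸ hcc₂)

end XTree
namespace XTree

/-- the lca of a cord of `L` is never a vertex both of whose (only two) child subtrees
are not joined by a cord -/
lemma lca_ne_nocross {X V : Type} (T : XTree X V) {L : Set (Set X)} {v c₁ c₂ : V}
    (hch : T.children v = {c₁, c₂})
    (hno : ∀ a b : X, a ∈ T.leafSet c₁ → b ∈ T.leafSet c₂ → ({a, b} : Set X) ∉ L)
    {a b : X} (hab : a ≠ b) (hmem : ({a, b} : Set X) ∈ L) {w : V}
    (hlca : T.IsLCA w {T.leaf a, T.leaf b}) : w ≠ v := by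
  intro hwv
  rw [hwv] at hlca
  have hc₁ : c₁ ∈ T.children v := by rw [hch]; exact Or.inl rfl
  have hint : T.Interior v := T.interior_iff_has_child.mpr ⟨c₁, hc₁⟩
  have hva : T.Desc v (T.leaf a) := hlca.1 _ (Or.inl rfl)
  have hvb : T.Desc v (T.leaf b) := hlca.1 _ (Or.inr rfl)
  have hlav : T.leaf a ≠ v := fun h => hint ⟨a, h⟩
  have hlbv : T.leaf b ≠ v := fun h => hint ⟨b, h⟩
  obtain ⟨d₁, hd₁, hd₁a⟩ := T.exists_child_above hva hlav
  obtain ⟨d₂, hd₂, hd₂b⟩ := T.exists_child_above hvb hlbv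
  have hdne : d₁ ≠ d₂ := by
    rintro rfl
    have h1 : T.Desc d₁ v := hlca.2 d₁ (by rintro y (rfl | rfl); exacts [hd₁a, hd₂b])
    exact hd₁.2 (T.desc_antisymm h1 ⟨1, by simp [hd₁.1]⟩)
  rw [hch] at hd₁ hd₂
  rcases hd₁ with rfl | rfl <;> rcases hd₂ with rfl | rfl
  · exact hdne rfl
  · exact hno a b hd₁a hd₂b hmem
  · exact hno b a hd₂b hd₁a (by rwa [Set.pair_comm] at hmem)
  · exact hdne rfl

lemma counterexample_B1 {X V : Type} [Fintype X] [Fintype V] (T : XTree X V) (hph : T.IsPhylo)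
    {L : Set (Set X)} {v c₁ c₂ : V} (hvroot : v ≠ T.root)
    (hch : T.children v = {c₁, c₂}) (h12 : c₁ ≠ c₂)
    (hno : ∀ a b : X, a ∈ T.leafSet c₁ → b ∈ T.leafSet c₂ → ({a, b} : Set X) ∉ L) :
    ∃ (T' : XTree X {w : V // w ≠ v}) (t : V → ℝ) (t' : {w : V // w ≠ v} → ℝ),
      T'.IsPhylo ∧ EquidistantProper T t ∧ EquidistantProper T' t' ∧
      (∀ a b : X, a ≠ b → ({a, b} : Set X) ∈ L →
        ∀ (w : V) (w' : {w : V // w ≠ v}), T.IsLCA w {T.leaf a, T.leaf b} →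
          T'.IsLCA w' {T'.leaf a, T'.leaf b} → t w = t' w') ∧
      ¬ TreeEquiv T T' := by
  classical
  have hc₁ : c₁ ∈ T.children v := by rw [hch]; exact Or.inl rfl
  have hc₂ : c₂ ∈ T.children v := by rw [hch]; exact Or.inr rfl
  have hint : T.Interior v := T.interior_iff_has_child.mpr ⟨c₁, hc₁⟩
  have hpv : T.parent v ≠ v := fun h => hvroot (T.parent_eq_self_iff.mp h)
  set Q : {w : V // w ≠ v} → {w : V // w ≠ v} := fun p =>
    if h : T.parent p.1 = v then ⟨T.parent v, hpv⟩ else ⟨T.parent p.1, h⟩ with hQdef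
  have hQv : ∀ (w : V) (hw : w ≠ v), T.parent w = v → Q ⟨w, hw⟩ = ⟨T.parent v, hpv⟩ := by
    intro w hw h; simp [hQdef, h]
  have hQo : ∀ (w : V) (hw : w ≠ v) (h : T.parent w ≠ v), Q ⟨w, hw⟩ = ⟨T.parent w, h⟩ := by
    intro w hw h; simp [hQdef, h]
  have hrootv : T.root ≠ v := Ne.symm hvroot
  have hlift : ∀ (n : ℕ) (w : V) (hw : w ≠ v) (hu : T.parent^[n] w ≠ v),
      ∃ m, Q^[m] ⟨w, hw⟩ = ⟨T.parent^[n] w, hu⟩ := by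
    intro n
    induction n using Nat.strong_induction_on with
    | _ n ih =>
      match n with
      | 0 => exact fun w hw hu => ⟨0, rfl⟩
      | 1 =>
        intro w hw hu
        have hu' : T.parent w ≠ v := by rwa [Function.iterate_one] at hu
        refine ⟨1, ?_⟩
        rw [Function.iterate_one, hQo w hw hu']
        exact Subtype.ext (by simp)
      | (k+2) =>
        intro w hw hu
        by_cases hpw : T.parent w = v
        · have hiter : T.parent^[k+2] w = T.parent^[k] (T.parent v) := by
            rw [Function.iterate_succ_apply, hpw, Function.iterate_succ_apply]
          have hu' : T.parent^[k] (T.parent v) ≠ v := by rw [← hiter]; exact hu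
          obtain ⟨m, hm⟩ := ih k (by omega) (T.parent v) hpv hu'
          refine ⟨m + 1, ?_⟩
          rw [Function.iterate_add_apply, Function.iterate_one, hQv w hw hpw, hm]
          exact Subtype.ext hiter.symm
        · have hiter : T.parent^[k+2] w = T.parent^[k+1] (T.parent w) := by
            rw [Function.iterate_succ_apply]
          have hu' : T.parent^[k+1] (T.parent w) ≠ v := by rw [← hiter]; exact hu
          obtain ⟨m, hm⟩ := ih (k+1) (by omega) (T.parent w) hpw hu'
          refine ⟨m + 1, ?_⟩
          rw [Function.iterate_add_apply, Function.iterate_one, hQo w hw hpw, hm]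
          exact Subtype.ext hiter.symm
  have hback : ∀ (n : ℕ) (u w : V) (hu : u ≠ v) (hw : w ≠ v),
      Q^[n] ⟨w, hw⟩ = ⟨u, hu⟩ → T.Desc u w := by
    intro n
    induction n with
    | zero =>
      intro u w hu hw h
      exact ⟨0, congrArg Subtype.val h⟩
    | succ k ih =>
      intro u w hu hw h
      rw [Function.iterate_succ_apply] at h
      by_cases hpw : T.parent w = v
      · rw [hQv w hw hpw] at h
        have := ih u (T.parent v) hu hpv h
        rw [← hpw] at this
        exact T.desc_of_desc_parent (T.desc_of_desc_parent this)
      · rw [hQo w hw hpw] at h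
        exact T.desc_of_desc_parent (ih u (T.parent w) hu hpw h)
  have hvnotleaf : v ∉ Set.range T.leaf := fun hv => hint hv
  have hleafne : ∀ x : X, T.leaf x ≠ v := fun x h => hvnotleaf ⟨x, h⟩
  have hcyc : ∀ c, c ∈ T.children v → c ≠ T.parent v := by
    intro c hc hcp
    have h1 : T.Desc c v := ⟨1, by simp [hcp.symm]⟩
    have h2 : T.Desc v c := ⟨1, by simp [hc.1]⟩
    exact hc.2 (T.desc_antisymm h2 h1).symm
  set T' : XTree X {w : V // w ≠ v} :=
    { root := ⟨T.root, hrootv⟩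
      parent := Q
      parent_root := by
        have : T.parent T.root ≠ v := by rw [T.parent_root]; exact hrootv
        rw [hQo T.root hrootv this]
        exact Subtype.ext T.parent_root
      reaches := by
        rintro ⟨w, hw⟩
        obtain ⟨N, hN⟩ := T.reaches w
        obtain ⟨m, hm⟩ := hlift N w hw (by rw [hN]; exact hrootv)
        refine ⟨m, ?_⟩
        rw [hm]
        exact Subtype.ext hN
      leaf := fun x => ⟨T.leaf x, hleafne x⟩
      leaf_inj := fun x y h => T.leaf_inj (congrArg Subtype.val h)
      leaf_iff := by
        rintro ⟨w, hw⟩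
        have hrange : (⟨w, hw⟩ : {w : V // w ≠ v}) ∈ Set.range (fun x => (⟨T.leaf x, hleafne x⟩ : {w : V // w ≠ v}))
            ↔ w ∈ Set.range T.leaf := by
          constructor
          · rintro ⟨x, hx⟩; exact ⟨x, congrArg Subtype.val hx⟩
          · rintro ⟨x, hx⟩; exact ⟨x, Subtype.ext hx⟩
        rw [hrange]
        by_cases hwp : w = T.parent v
        · subst hwp
          constructor
          · intro h
            exfalso
            have h1 : Q ⟨c₁, hc₁.2⟩ = ⟨T.parent v, hpv⟩ := hQv c₁ hc₁.2 hc₁.1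
            have := h ⟨c₁, hc₁.2⟩ (by rw [h1])
            exact hcyc c₁ hc₁ (congrArg Subtype.val this)
          · intro h
            exfalso
            have := (T.leaf_iff (T.parent v)).mpr h v (T.parent_mem_children hvroot).1
            exact hpv this.symm
        · rw [← T.leaf_iff w]
          constructor
          · intro h u hu
            have huv : u ≠ v := by
              rintro rfl
              exact hwp hu.symm
            have hpu : T.parent u ≠ v := by rw [hu]; exact hw
            have := h ⟨u, huv⟩ (by rw [hQo u huv hpu]; exact Subtype.ext hu)
            exact congrArg Subtype.val this
          · rintro h ⟨u, hu⟩ hQu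
            by_cases hpu : T.parent u = v
            · rw [hQv u hu hpu] at hQu
              exact absurd (congrArg Subtype.val hQu) (Ne.symm (by simpa using hwp))
            · rw [hQo u hu hpu] at hQu
              exact Subtype.ext (h u (congrArg Subtype.val hQu)) } with hT'def
  have hT'parent : T'.parent = Q := rfl
  have hT'leaf : ∀ x, T'.leaf x = ⟨T.leaf x, hleafne x⟩ := fun _ => rfl
  have hdesc1 : ∀ {u w : V} (hu : u ≠ v) (hw : w ≠ v),
      T.Desc u w → T'.Desc ⟨u, hu⟩ ⟨w, hw⟩ := by
    rintro u w hu hw ⟨n, hn⟩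
    obtain ⟨m, hm⟩ := hlift n w hw (by rw [hn]; exact hu)
    refine ⟨m, ?_⟩
    rw [hT'parent, hm]
    exact Subtype.ext hn
  have hdesc2 : ∀ {u w : V} (hu : u ≠ v) (hw : w ≠ v),
      T'.Desc ⟨u, hu⟩ ⟨w, hw⟩ → T.Desc u w := by
    rintro u w hu hw ⟨n, hn⟩
    exact hback n u w hu hw hn
  have hleafSet : ∀ (w : V) (hw : w ≠ v), T'.leafSet ⟨w, hw⟩ = T.leafSet w := by
    intro w hw
    ext x
    constructor
    · intro hx; exact hdesc2 hw (hleafne x) hx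
    · intro hx; exact hdesc1 hw (hleafne x) hx
  have hintcorr : ∀ (w : V) (hw : w ≠ v), T'.Interior ⟨w, hw⟩ → T.Interior w := by
    intro w hw h hcon
    apply h
    obtain ⟨x, hx⟩ := hcon
    exact ⟨x, by rw [hT'leaf]; exact Subtype.ext hx⟩
  have hph' : T'.IsPhylo := by
    have hchild : ∀ (w : V) (hw : w ≠ v), T.Interior w →
        2 ≤ (T'.children ⟨w, hw⟩).ncard := by
      intro w hw hwint
      by_cases hwp : w = T.parent v
      · subst hwp
        apply two_le_ncard_of_mem (a := ⟨c₁, hc₁.2⟩) (b := ⟨c₂, hc₂.2⟩)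
        · refine ⟨?_, ?_⟩
          · show Q ⟨c₁, hc₁.2⟩ = _
            rw [hQv c₁ hc₁.2 hc₁.1]
          · intro h
            exact hcyc c₁ hc₁ (congrArg Subtype.val h)
        · refine ⟨?_, ?_⟩
          · show Q ⟨c₂, hc₂.2⟩ = _
            rw [hQv c₂ hc₂.2 hc₂.1]
          · intro h
            exact hcyc c₂ hc₂ (congrArg Subtype.val h)
        · intro h
          exact h12 (congrArg Subtype.val h)
      · obtain ⟨d₁, d₂, hd₁, hd₂, hdne⟩ := exists_two_children hph hwint
        have hdv : ∀ d, d ∈ T.children w → d ≠ v := by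
          intro d hd
          rintro rfl
          exact hwp hd.1.symm
        have hmap : ∀ (d : V) (hd : d ∈ T.children w),
            (⟨d, hdv d hd⟩ : {w : V // w ≠ v}) ∈ T'.children ⟨w, hw⟩ := by
          intro d hd
          have hpd : T.parent d ≠ v := by rw [hd.1]; exact hw
          refine ⟨?_, fun h => hd.2 (congrArg Subtype.val h)⟩
          show Q _ = _
          rw [hQo d (hdv d hd) hpd]
          exact Subtype.ext hd.1
        exact two_le_ncard_of_mem (hmap d₁ hd₁) (hmap d₂ hd₂)
          (fun h => hdne (congrArg Subtype.val h))
    constructor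
    · exact hchild T.root hrootv (interior_root hph)
    · rintro ⟨w, hw⟩ hwroot hwint
      exact hchild w hw (hintcorr w hw hwint)
  refine ⟨T', fun w => ((T.leafSet w).ncard : ℝ) - 1,
    fun o => ((T'.leafSet o).ncard : ℝ) - 1,
    hph', ncardWeight_proper hph, ncardWeight_proper hph', ?_, ?_⟩
  · intro a b hab hmem w w' hw hw'
    have hwv : w ≠ v := T.lca_ne_nocross hch hno hab hmem hw
    have hlca' : T'.IsLCA ⟨w, hwv⟩ {T'.leaf a, T'.leaf b} := by
      constructor
      · rintro z (rfl | rfl)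
        · exact hdesc1 hwv (hleafne a) (hw.1 _ (Or.inl rfl))
        · exact hdesc1 hwv (hleafne b) (hw.1 _ (Or.inr rfl))
      · rintro ⟨z, hz⟩ hzc
        have h1 : T.Desc z (T.leaf a) := hdesc2 hz (hleafne a) (hzc _ (Or.inl rfl))
        have h2 : T.Desc z (T.leaf b) := hdesc2 hz (hleafne b) (hzc _ (Or.inr rfl))
        exact hdesc1 hz hwv (hw.2 z (by rintro y (rfl | rfl); exacts [h1, h2]))
    have heq : w' = ⟨w, hwv⟩ := T'.lca_unique hw' hlca'
    subst heq
    show ((T.leafSet w).ncard : ℝ) - 1 = ((T'.leafSet ⟨w, hwv⟩).ncard : ℝ) - 1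
    rw [hleafSet w hwv]
  · intro hequiv
    obtain ⟨u', hu'⟩ := treeEquiv_leafSet hequiv v
    obtain ⟨u, hu⟩ := u'
    rw [hleafSet u hu] at hu'
    exact hu (leafSet_injective hph hu')

end XTree
namespace XTree

lemma eq_root_of_desc {X V : Type} (T : XTree X V) {z : V} (h : T.Desc z T.root) :
    z = T.root := by
  obtain ⟨n, hn⟩ := h
  rw [T.root_iter] at hn
  exact hn.symm

lemma counterexample_B2 {X V : Type} [Fintype X] [Fintype V] (T : XTree X V) (hph : T.IsPhylo)
    {L : Set (Set X)} {c₁ c₂ : V}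
    (hch : T.children T.root = {c₁, c₂}) (h12 : c₁ ≠ c₂) (hc₁int : T.Interior c₁)
    (hno : ∀ a b : X, a ∈ T.leafSet c₁ → b ∈ T.leafSet c₂ → ({a, b} : Set X) ∉ L) :
    ∃ (T' : XTree X {w : V // w ≠ c₁}) (t : V → ℝ) (t' : {w : V // w ≠ c₁} → ℝ),
      T'.IsPhylo ∧ EquidistantProper T t ∧ EquidistantProper T' t' ∧
      (∀ a b : X, a ≠ b → ({a, b} : Set X) ∈ L →
        ∀ (w : V) (w' : {w : V // w ≠ c₁}), T.IsLCA w {T.leaf a, T.leaf b} →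
          T'.IsLCA w' {T'.leaf a, T'.leaf b} → t w = t' w') ∧
      ¬ TreeEquiv T T' := by
  classical
  have hc₁ : c₁ ∈ T.children T.root := by rw [hch]; exact Or.inl rfl
  have hc₂ : c₂ ∈ T.children T.root := by rw [hch]; exact Or.inr rfl
  have hrootc₁ : T.root ≠ c₁ := Ne.symm (T.child_ne_root hc₁)
  have hpc₁ : T.parent c₁ = T.root := hc₁.1
  have hrootint : T.Interior T.root := interior_root hph
  set Q : {w : V // w ≠ c₁} → {w : V // w ≠ c₁} := fun p =>
    if h : T.parent p.1 = c₁ then ⟨T.root, hrootc₁⟩ else ⟨T.parent p.1, h⟩ with hQdef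
  have hQc : ∀ (w : V) (hw : w ≠ c₁), T.parent w = c₁ → Q ⟨w, hw⟩ = ⟨T.root, hrootc₁⟩ := by
    intro w hw h; simp [hQdef, h]
  have hQo : ∀ (w : V) (hw : w ≠ c₁) (h : T.parent w ≠ c₁), Q ⟨w, hw⟩ = ⟨T.parent w, h⟩ := by
    intro w hw h; simp [hQdef, h]
  have hc₁iter : ∀ k : ℕ, 1 ≤ k → T.parent^[k] c₁ = T.root := by
    intro k hk
    have : T.parent^[k] c₁ = T.parent^[k-1] (T.parent c₁) := by
      rw [← Function.iterate_succ_apply, Nat.succ_eq_add_one, Nat.sub_add_cancel hk]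
    rw [this, hpc₁, T.root_iter]
  have hlift : ∀ (n : ℕ) (w : V) (hw : w ≠ c₁) (hu : T.parent^[n] w ≠ c₁),
      ∃ m, Q^[m] ⟨w, hw⟩ = ⟨T.parent^[n] w, hu⟩ := by
    intro n
    induction n with
    | zero => exact fun w hw hu => ⟨0, rfl⟩
    | succ k ih =>
      intro w hw hu
      by_cases hpw : T.parent w = c₁
      · have hiter : T.parent^[k+1] w = T.parent^[k] c₁ := by
          rw [Function.iterate_succ_apply, hpw]
        rcases Nat.eq_zero_or_pos k with hk0 | hkpos
        · exfalso
          apply hu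
          rw [hiter, hk0]
          exact Function.iterate_zero_apply _ _
        · refine ⟨1, ?_⟩
          rw [Function.iterate_one, hQc w hw hpw]
          exact Subtype.ext (show T.root = T.parent^[k+1] w by
            rw [hiter, hc₁iter k hkpos])
      · have hiter : T.parent^[k+1] w = T.parent^[k] (T.parent w) := by
          rw [Function.iterate_succ_apply]
        have hu' : T.parent^[k] (T.parent w) ≠ c₁ := by rw [← hiter]; exact hu
        obtain ⟨m, hm⟩ := ih (T.parent w) hpw hu'
        refine ⟨m + 1, ?_⟩
        rw [Function.iterate_add_apply, Function.iterate_one, hQo w hw hpw, hm]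
        exact Subtype.ext hiter.symm
  have hback : ∀ (n : ℕ) (u w : V) (hu : u ≠ c₁) (hw : w ≠ c₁),
      Q^[n] ⟨w, hw⟩ = ⟨u, hu⟩ → T.Desc u w := by
    intro n
    induction n with
    | zero =>
      intro u w hu hw h
      exact ⟨0, congrArg Subtype.val h⟩
    | succ k ih =>
      intro u w hu hw h
      rw [Function.iterate_succ_apply] at h
      by_cases hpw : T.parent w = c₁
      · rw [hQc w hw hpw] at h
        have := ih u T.root hu hrootc₁ h
        have hu' : u = T.root := T.eq_root_of_desc this
        subst hu'
        exact T.desc_root w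
      · rw [hQo w hw hpw] at h
        exact T.desc_of_desc_parent (ih u (T.parent w) hu hpw h)
  have hc₁notleaf : c₁ ∉ Set.range T.leaf := fun h => hc₁int h
  have hleafne : ∀ x : X, T.leaf x ≠ c₁ := fun x h => hc₁notleaf ⟨x, h⟩
  have hrootnotleaf : T.root ∉ Set.range T.leaf := fun h => hrootint h
  have hleafroot : ∀ x : X, T.leaf x ≠ T.root := fun x h => hrootnotleaf ⟨x, h⟩
  set T' : XTree X {w : V // w ≠ c₁} :=
    { root := ⟨T.root, hrootc₁⟩
      parent := Q
      parent_root := by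
        have h : T.parent T.root ≠ c₁ := by rw [T.parent_root]; exact hrootc₁
        rw [hQo T.root hrootc₁ h]
        exact Subtype.ext T.parent_root
      reaches := by
        rintro ⟨w, hw⟩
        obtain ⟨N, hN⟩ := T.reaches w
        obtain ⟨m, hm⟩ := hlift N w hw (by rw [hN]; exact hrootc₁)
        refine ⟨m, ?_⟩
        rw [hm]
        exact Subtype.ext hN
      leaf := fun x => ⟨T.leaf x, hleafne x⟩
      leaf_inj := fun x y h => T.leaf_inj (congrArg Subtype.val h)
      leaf_iff := by
        rintro ⟨w, hw⟩
        have hrange : (⟨w, hw⟩ : {w : V // w ≠ c₁}) ∈ Set.range (fun x => (⟨T.leaf x, hleafne x⟩ : {w : V // w ≠ c₁}))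
            ↔ w ∈ Set.range T.leaf := by
          constructor
          · rintro ⟨x, hx⟩; exact ⟨x, congrArg Subtype.val hx⟩
          · rintro ⟨x, hx⟩; exact ⟨x, Subtype.ext hx⟩
        rw [hrange]
        by_cases hwr : w = T.root
        · subst hwr
          constructor
          · intro h
            exfalso
            have hc₂c₁ : c₂ ≠ c₁ := Ne.symm h12
            have hpc₂ : T.parent c₂ ≠ c₁ := by rw [hc₂.1]; exact hrootc₁
            have := h ⟨c₂, hc₂c₁⟩ (by rw [hQo c₂ hc₂c₁ hpc₂]; exact Subtype.ext hc₂.1)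
            exact (T.child_ne_root hc₂) (congrArg Subtype.val this)
          · intro h
            exact absurd h hrootnotleaf
        · rw [← T.leaf_iff w]
          constructor
          · intro h u hu
            have huc : u ≠ c₁ := by
              rintro rfl
              exact hwr (hu.symm.trans hpc₁)
            have hpu : T.parent u ≠ c₁ := by rw [hu]; exact hw
            have := h ⟨u, huc⟩ (by rw [hQo u huc hpu]; exact Subtype.ext hu)
            exact congrArg Subtype.val this
          · rintro h ⟨u, hu⟩ hQu
            by_cases hpu : T.parent u = c₁
            · rw [hQc u hu hpu] at hQu
              exact absurd (congrArg Subtype.val hQu) (Ne.symm hwr)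
            · rw [hQo u hu hpu] at hQu
              exact Subtype.ext (h u (congrArg Subtype.val hQu)) } with hT'def
  have hT'parent : T'.parent = Q := rfl
  have hT'leaf : ∀ x, T'.leaf x = ⟨T.leaf x, hleafne x⟩ := fun _ => rfl
  have hT'root : T'.root = ⟨T.root, hrootc₁⟩ := rfl
  have hdesc1 : ∀ {u w : V} (hu : u ≠ c₁) (hw : w ≠ c₁),
      T.Desc u w → T'.Desc ⟨u, hu⟩ ⟨w, hw⟩ := by
    rintro u w hu hw ⟨n, hn⟩
    obtain ⟨m, hm⟩ := hlift n w hw (by rw [hn]; exact hu)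
    refine ⟨m, ?_⟩
    rw [hT'parent, hm]
    exact Subtype.ext hn
  have hdesc2 : ∀ {u w : V} (hu : u ≠ c₁) (hw : w ≠ c₁),
      T'.Desc ⟨u, hu⟩ ⟨w, hw⟩ → T.Desc u w := by
    rintro u w hu hw ⟨n, hn⟩
    exact hback n u w hu hw hn
  have hleafSet : ∀ (w : V) (hw : w ≠ c₁), T'.leafSet ⟨w, hw⟩ = T.leafSet w := by
    intro w hw
    ext x
    constructor
    · intro hx; exact hdesc2 hw (hleafne x) hx
    · intro hx; exact hdesc1 hw (hleafne x) hx
  have hintcorr : ∀ (w : V) (hw : w ≠ c₁), T'.Interior ⟨w, hw⟩ → T.Interior w := by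
    intro w hw h hcon
    apply h
    obtain ⟨x, hx⟩ := hcon
    exact ⟨x, by rw [hT'leaf]; exact Subtype.ext hx⟩
  have hph' : T'.IsPhylo := by
    have hchild : ∀ (w : V) (hw : w ≠ c₁), T.Interior w →
        2 ≤ (T'.children ⟨w, hw⟩).ncard := by
      intro w hw hwint
      by_cases hwr : w = T.root
      · subst hwr
        obtain ⟨d, hd⟩ := T.interior_iff_has_child.mp hc₁int
        have hdc₁ : d ≠ c₁ := hd.2
        have hdroot : d ≠ T.root := T.child_ne_root hd
        have hc₂c₁ : c₂ ≠ c₁ := Ne.symm h12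
        apply two_le_ncard_of_mem (a := ⟨c₂, hc₂c₁⟩) (b := ⟨d, hdc₁⟩)
        · refine ⟨?_, fun h => (T.child_ne_root hc₂) (congrArg Subtype.val h)⟩
          show Q _ = _
          have hpc₂ : T.parent c₂ ≠ c₁ := by rw [hc₂.1]; exact hrootc₁
          rw [hQo c₂ hc₂c₁ hpc₂]
          exact Subtype.ext hc₂.1
        · refine ⟨?_, fun h => hdroot (congrArg Subtype.val h)⟩
          show Q _ = _
          rw [hQc d hdc₁ hd.1]
        · intro h
          have hcd : c₂ = d := congrArg Subtype.val h
          apply hrootc₁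
          rw [← hc₂.1, hcd, hd.1]
      · obtain ⟨d₁, d₂, hd₁, hd₂, hdne⟩ := exists_two_children hph hwint
        have hdv : ∀ d, d ∈ T.children w → d ≠ c₁ := by
          intro d hd
          rintro rfl
          exact hwr (hd.1.symm.trans hpc₁)
        have hmap : ∀ (d : V) (hd : d ∈ T.children w),
            (⟨d, hdv d hd⟩ : {w : V // w ≠ c₁}) ∈ T'.children ⟨w, hw⟩ := by
          intro d hd
          have hpd : T.parent d ≠ c₁ := by rw [hd.1]; exact hw
          refine ⟨?_, fun h => hd.2 (congrArg Subtype.val h)⟩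
          show Q _ = _
          rw [hQo d (hdv d hd) hpd]
          exact Subtype.ext hd.1
        exact two_le_ncard_of_mem (hmap d₁ hd₁) (hmap d₂ hd₂)
          (fun h => hdne (congrArg Subtype.val h))
    constructor
    · exact hchild T.root hrootc₁ hrootint
    · rintro ⟨w, hw⟩ hwroot hwint
      exact hchild w hw (hintcorr w hw hwint)
  -- weights
  set cX : ℝ := (Fintype.card X : ℝ) with hcXdef
  set t : V → ℝ := fun w =>
    if w = c₁ then cX - 1 else if w = T.root then cX else ((T.leafSet w).ncard : ℝ) - 1
    with htdef
  have ht_le : ∀ w : V, ((T.leafSet w).ncard : ℝ) ≤ cX := by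
    intro w
    have h1 : (T.leafSet w).ncard ≤ (Set.univ : Set X).ncard :=
      Set.ncard_le_ncard (Set.subset_univ _) (Set.toFinite _)
    rw [Set.ncard_univ, Nat.card_eq_fintype_card] at h1
    rw [hcXdef]
    exact_mod_cast h1
  have ht_lt : ∀ w : V, w ≠ T.root → ((T.leafSet w).ncard : ℝ) < cX := by
    intro w hw
    have hss : T.leafSet w ⊂ Set.univ :=
      (Set.ssubset_univ_iff).mpr (leafSet_ne_univ hph hw)
    have h1 := Set.ncard_lt_ncard hss (Set.toFinite _)
    rw [Set.ncard_univ, Nat.card_eq_fintype_card] at h1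
    rw [hcXdef]
    exact_mod_cast h1
  have ht_c₁ : t c₁ = cX - 1 := by rw [htdef]; simp
  have ht_root : t T.root = cX := by rw [htdef]; simp [hrootc₁]
  have ht_other : ∀ w, w ≠ c₁ → w ≠ T.root → t w = ((T.leafSet w).ncard : ℝ) - 1 := by
    intro w h1 h2; rw [htdef]; simp [h1, h2]
  have ht : EquidistantProper T t := by
    refine ⟨?_, ?_, ?_⟩
    · intro x
      rw [ht_other _ (hleafne x) (hleafroot x), T.leafSet_leaf]
      simp
    · intro w
      by_cases hw1 : w = c₁
      · subst hw1
        rw [ht_c₁, hpc₁, ht_root]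
        linarith
      · by_cases hw2 : w = T.root
        · subst hw2
          rw [T.parent_root]
        · rw [ht_other w hw1 hw2]
          by_cases hp1 : T.parent w = c₁
          · rw [hp1, ht_c₁]
            have := ht_lt w hw2
            linarith
          · by_cases hp2 : T.parent w = T.root
            · rw [hp2, ht_root]
              have := ht_le w
              linarith
            · rw [ht_other _ hp1 hp2]
              have hsub : T.leafSet w ⊆ T.leafSet (T.parent w) :=
                T.leafSet_mono (T.parent_desc w)
              have h1 := Set.ncard_le_ncard hsub (Set.toFinite _)
              have h2 : ((T.leafSet w).ncard : ℝ) ≤ ((T.leafSet (T.parent w)).ncard : ℝ) := by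
                exact_mod_cast h1
              linarith
    · intro w hwroot hwint
      by_cases hw1 : w = c₁
      · subst hw1
        rw [ht_c₁, hpc₁, ht_root]
        linarith
      · rw [ht_other w hw1 hwroot]
        by_cases hp1 : T.parent w = c₁
        · rw [hp1, ht_c₁]
          have := ht_lt w hwroot
          linarith
        · by_cases hp2 : T.parent w = T.root
          · rw [hp2, ht_root]
            have := ht_le w
            linarith
          · rw [ht_other _ hp1 hp2]
            have hss := leafSet_ssubset hph hwroot
            have h1 := Set.ncard_lt_ncard hss (Set.toFinite _)
            have h2 : ((T.leafSet w).ncard : ℝ) < ((T.leafSet (T.parent w)).ncard : ℝ) := by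
              exact_mod_cast h1
            linarith
  refine ⟨T', t, fun o => ((T'.leafSet o).ncard : ℝ) - 1, hph', ht,
    ncardWeight_proper hph', ?_, ?_⟩
  · intro a b hab hmem w w' hw hw'
    have hwroot : w ≠ T.root := T.lca_ne_nocross hch hno hab hmem hw
    by_cases hwc : w = c₁
    · rw [hwc] at hw
      have hlca' : T'.IsLCA ⟨T.root, hrootc₁⟩ {T'.leaf a, T'.leaf b} := by
        constructor
        · rintro z (rfl | rfl) <;> exact T'.desc_root _
        · rintro ⟨z, hz⟩ hzc
          have h1 : T.Desc z (T.leaf a) := hdesc2 hz (hleafne a) (hzc _ (Or.inl rfl))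
          have h2 : T.Desc z (T.leaf b) := hdesc2 hz (hleafne b) (hzc _ (Or.inr rfl))
          have h3 : T.Desc z c₁ := hw.2 z (by rintro y (rfl | rfl); exacts [h1, h2])
          have h4 : T.Desc z T.root := by
            have := T.desc_parent_of_ne h3 hz
            rwa [hpc₁] at this
          have h5 : z = T.root := T.eq_root_of_desc h4
          subst h5
          exact T'.desc_refl _
      have heq : w' = ⟨T.root, hrootc₁⟩ := T'.lca_unique hw' hlca'
      subst heq
      show t w = ((T'.leafSet ⟨T.root, hrootc₁⟩).ncard : ℝ) - 1
      rw [hwc, ht_c₁, hleafSet T.root hrootc₁, T.leafSet_root, Set.ncard_univ,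
        Nat.card_eq_fintype_card, hcXdef]
    · have hlca' : T'.IsLCA ⟨w, hwc⟩ {T'.leaf a, T'.leaf b} := by
        constructor
        · rintro z (rfl | rfl)
          · exact hdesc1 hwc (hleafne a) (hw.1 _ (Or.inl rfl))
          · exact hdesc1 hwc (hleafne b) (hw.1 _ (Or.inr rfl))
        · rintro ⟨z, hz⟩ hzc
          have h1 : T.Desc z (T.leaf a) := hdesc2 hz (hleafne a) (hzc _ (Or.inl rfl))
          have h2 : T.Desc z (T.leaf b) := hdesc2 hz (hleafne b) (hzc _ (Or.inr rfl))
          exact hdesc1 hz hwc (hw.2 z (by rintro y (rfl | rfl); exacts [h1, h2]))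
      have heq : w' = ⟨w, hwc⟩ := T'.lca_unique hw' hlca'
      subst heq
      show t w = ((T'.leafSet ⟨w, hwc⟩).ncard : ℝ) - 1
      rw [ht_other w hwc hwroot, hleafSet w hwc]
  · intro hequiv
    obtain ⟨u', hu'⟩ := treeEquiv_leafSet hequiv c₁
    obtain ⟨u, hu⟩ := u'
    rw [hleafSet u hu] at hu'
    exact hu (leafSet_injective hph hu')

end XTree
/-- `L` is a topological lasso for `T` (any equidistant proper realization
of the distances on the cords of `L` on another X-tree forces equivalence of the trees)
iff every child-edge graph `G(L,v)` of an interior vertex is a clique. -/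
theorem stmt7 {X V : Type} [Fintype X] [Fintype V] (T : XTree X V)
    (hph : T.IsPhylo) (hX : 3 ≤ Fintype.card X)
    (L : Set (Set X)) (hc : ∀ c ∈ L, IsCord c) (hcov : ∀ x : X, ∃ c ∈ L, x ∈ c) :
    (∀ (V' : Type) [Fintype V'] (T' : XTree X V'), T'.IsPhylo →
      ∀ (t : V → ℝ) (t' : V' → ℝ), EquidistantProper T t → EquidistantProper T' t' →
        (∀ a b : X, a ≠ b → ({a, b} : Set X) ∈ L →
          ∀ (v : V) (v' : V'), T.IsLCA v {T.leaf a, T.leaf b} →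
            T'.IsLCA v' {T'.leaf a, T'.leaf b} → t v = t' v') →
        TreeEquiv T T') ↔ T.IsTopoLasso L := by
  constructor
  · -- if L determines the tree, the child-edge graphs are cliques (contrapositive)
    intro hLHS
    by_contra hnot
    rw [XTree.IsTopoLasso] at hnot
    push_neg at hnot
    obtain ⟨v, c₁, c₂, hc₁, hc₂, h12, hno⟩ := hnot
    have hno' : ∀ a b : X, a ∈ T.leafSet c₁ → b ∈ T.leafSet c₂ → ({a, b} : Set X) ∉ L := by
      intro a b ha hb
      exact hno a b ha hb
    by_cases hex : ∃ c₃ ∈ T.children v, c₃ ≠ c₁ ∧ c₃ ≠ c₂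
    · obtain ⟨c₃, hc₃, h31, h32⟩ := hex
      obtain ⟨T', t, t', hph', ht, ht', hagree, hnequiv⟩ :=
        T.counterexample_A hph hc₁ hc₂ hc₃ h12 h31 h32 hno'
      exact hnequiv (hLHS (Option V) T' hph' t t' ht ht' hagree)
    · push_neg at hex
      have hch : T.children v = {c₁, c₂} := by
        apply Set.Subset.antisymm
        · intro c hc
          by_cases h1 : c = c₁
          · exact Or.inl h1
          · exact Or.inr (hex c hc h1)
        · rintro c (rfl | rfl)
          exacts [hc₁, hc₂]
      by_cases hvr : v = T.root
      · rw [hvr] at hch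
        by_cases h1int : T.Interior c₁
        · obtain ⟨T', t, t', hph', ht, ht', hagree, hnequiv⟩ :=
            T.counterexample_B2 hph hch h12 h1int hno'
          exact hnequiv (hLHS _ T' hph' t t' ht ht' hagree)
        · by_cases h2int : T.Interior c₂
          · have hch' : T.children T.root = {c₂, c₁} := by rw [hch, Set.pair_comm]
            have hno'' : ∀ a b : X, a ∈ T.leafSet c₂ → b ∈ T.leafSet c₁ →
                ({a, b} : Set X) ∉ L := by
              intro a b ha hb hm
              rw [Set.pair_comm] at hm
              exact hno' b a hb ha hm
            obtain ⟨T', t, t', hph', ht, ht', hagree, hnequiv⟩ :=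
              T.counterexample_B2 hph hch' (Ne.symm h12) h2int hno''
            exact hnequiv (hLHS _ T' hph' t t' ht ht' hagree)
          · -- both children of the root are leaves: |X| ≤ 2, contradiction
            exfalso
            have hL1 : T.IsLeaf c₁ := not_not.mp h1int
            have hL2 : T.IsLeaf c₂ := not_not.mp h2int
            obtain ⟨x₁, hx₁⟩ := hL1
            obtain ⟨x₂, hx₂⟩ := hL2
            have hrootint := XTree.interior_root hph
            have hsub : (Set.univ : Set X) ⊆ {x₁, x₂} := by
              intro x _
              have hd : T.Desc T.root (T.leaf x) := T.desc_root _
              have hne : T.leaf x ≠ T.root := fun h => hrootint ⟨x, h⟩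
              obtain ⟨c, hc, hcx⟩ := T.exists_child_above hd hne
              rw [hch] at hc
              rcases hc with rfl | rfl
              · have : x ∈ T.leafSet c := hcx
                rw [← hx₁, T.leafSet_leaf] at this
                exact Or.inl this
              · have : x ∈ T.leafSet c := hcx
                rw [← hx₂, T.leafSet_leaf] at this
                exact Or.inr this
            have h1 : (Set.univ : Set X).ncard ≤ ({x₁, x₂} : Set X).ncard :=
              Set.ncard_le_ncard hsub (Set.toFinite _)
            have h2 : ({x₁, x₂} : Set X).ncard ≤ 2 := by
              apply le_trans (Set.ncard_insert_le _ _)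
              simp
            rw [Set.ncard_univ, Nat.card_eq_fintype_card] at h1
            omega
      · obtain ⟨T', t, t', hph', ht, ht', hagree, hnequiv⟩ :=
          T.counterexample_B1 hph hvr hch h12 hno'
        exact hnequiv (hLHS _ T' hph' t t' ht ht' hagree)
  · -- cliques imply that L determines the tree
    intro hlasso V' _ T' hph' t t' ht ht' hagree
    exact XTree.clusters_eq_of_lasso hph hph' ht ht' hlasso hagree
end

section
/- Let T be a rooted phylogenetic X-tree and L a topological lasso for T. Then for every vertex v of T, the subgraph Γ_v(L) of the cord graph Γ(L) induced by the leaf set L(v) is connected; in particular Γ(L) itself is connected. -/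
open scoped Classical

namespace Stmt10Aux

variable {X V : Type}

noncomputable def depth (T : XTree X V) (v : V) : ℕ := Nat.find (T.reaches v)

lemma depth_spec (T : XTree X V) (v : V) : T.parent^[depth T v] v = T.root :=
  Nat.find_spec (T.reaches v)

lemma depth_min (T : XTree X V) (v : V) {m : ℕ} (hm : m < depth T v) :
    T.parent^[m] v ≠ T.root := Nat.find_min (T.reaches v) hm

lemma child_ne_root (T : XTree X V) {v c : V} (hc : c ∈ T.children v) : c ≠ T.root := by
  rintro rfl
  have h1 := hc.1
  rw [T.parent_root] at h1
  exact hc.2 h1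

lemma depth_lt_of_child (T : XTree X V) {v c : V} (hc : c ∈ T.children v) :
    depth T v < depth T c := by
  have h0 : depth T c ≠ 0 := by
    intro h
    have hs := depth_spec T c
    rw [h] at hs
    exact child_ne_root T hc hs
  have hs : T.parent^[depth T c - 1] v = T.root := by
    have := depth_spec T c
    rw [← Nat.succ_pred_eq_of_ne_zero h0, Function.iterate_succ_apply, hc.1] at this
    exact this
  have h2 : depth T v ≤ depth T c - 1 := Nat.find_min' (T.reaches v) hs
  omega

lemma depth_lt_card [Fintype V] (T : XTree X V) (v : V) : depth T v < Fintype.card V := by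
  have hne : ∀ i j : Fin (depth T v + 1), (i : ℕ) < (j : ℕ) →
      T.parent^[(i : ℕ)] v ≠ T.parent^[(j : ℕ)] v := by
    intro i j hij heq
    have hj : (j : ℕ) ≤ depth T v := by omega
    have key : T.parent^[(depth T v - (j : ℕ)) + (i : ℕ)] v = T.root := by
      rw [Function.iterate_add_apply, heq, ← Function.iterate_add_apply]
      have : depth T v - (j : ℕ) + (j : ℕ) = depth T v := by omega
      rw [this]
      exact depth_spec T v
    exact depth_min T v (by omega) key
  have hinj : Function.Injective (fun i : Fin (depth T v + 1) => T.parent^[(i : ℕ)] v) := by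
    intro i j heq
    rcases lt_trichotomy (i : ℕ) (j : ℕ) with h | h | h
    · exact absurd heq (hne i j h)
    · exact Fin.ext h
    · exact absurd heq.symm (hne j i h)
  have := Fintype.card_le_of_injective _ hinj
  simp only [Fintype.card_fin] at this
  omega

lemma leaf_no_desc (T : XTree X V) {v : V} (hv : T.IsLeaf v) {w : V} {n : ℕ}
    (h : T.parent^[n] w = v) : w = v := by
  induction n with
  | zero => exact h
  | succ n ih =>
    rw [Function.iterate_succ_apply'] at h
    exact ih (((T.leaf_iff v).2 hv) _ h)

lemma leafSet_of_leaf (T : XTree X V) (x : X) : T.leafSet (T.leaf x) = {x} := by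
  ext y
  constructor
  · rintro ⟨n, hn⟩
    exact T.leaf_inj (leaf_no_desc T ⟨x, rfl⟩ hn)
  · rintro rfl
    exact ⟨0, rfl⟩

lemma exists_child_mem (T : XTree X V) {v : V} (hv : T.Interior v) {x : X}
    (hx : x ∈ T.leafSet v) : ∃ c ∈ T.children v, x ∈ T.leafSet c := by
  have hx' : ∃ n, T.parent^[n] (T.leaf x) = v := hx
  have hn : T.parent^[Nat.find hx'] (T.leaf x) = v := Nat.find_spec hx'
  have hn0 : Nat.find hx' ≠ 0 := by
    intro h
    rw [h] at hn
    exact hv ⟨x, hn⟩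
  refine ⟨T.parent^[Nat.find hx' - 1] (T.leaf x), ⟨?_, ?_⟩, ⟨Nat.find hx' - 1, rfl⟩⟩
  · have h := hn
    rw [show Nat.find hx' = (Nat.find hx' - 1) + 1 by omega,
      Function.iterate_succ_apply'] at h
    exact h
  · intro h
    exact Nat.find_min hx' (Nat.pred_lt hn0) h

lemma children_nonempty (T : XTree X V) {v : V} (hv : T.Interior v) :
    ∃ c, c ∈ T.children v := by
  have h : ¬ ∀ w, T.parent w = v → w = v := fun h => hv ((T.leaf_iff v).1 h)
  push_neg at h
  obtain ⟨w, hw1, hw2⟩ := h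
  exact ⟨w, hw1, hw2⟩

lemma leafSet_child_subset (T : XTree X V) {v c : V} (hc : c ∈ T.children v) :
    T.leafSet c ⊆ T.leafSet v := by
  rintro x ⟨m, hm⟩
  refine ⟨m + 1, ?_⟩
  rw [Function.iterate_succ_apply', hm]
  exact hc.1

lemma reach_mono {α : Type} (G : SimpleGraph α) {P S : Set α} (h : P ⊆ S) {a b : ↥P}
    (hr : (G.induce P).Reachable a b) :
    (G.induce S).Reachable ⟨a.1, h a.2⟩ ⟨b.1, h b.2⟩ := by
  exact hr.map (⟨fun x => ⟨x.1, h x.2⟩, fun {x y} hxy => hxy⟩ :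
    G.induce P →g G.induce S)

lemma key [Fintype V] (T : XTree X V) (L : Set (Set X)) (hc : ∀ c ∈ L, IsCord c)
    (hlasso : T.IsTopoLasso L) :
    ∀ n : ℕ, ∀ v : V, Fintype.card V - depth T v ≤ n →
      (T.leafSet v).Nonempty ∧ ((cordGraph L).induce (T.leafSet v)).Connected := by
  intro n
  induction n using Nat.strong_induction_on with
  | _ n ih =>
    intro v hv
    by_cases hleaf : T.IsLeaf v
    · obtain ⟨x, rfl⟩ := hleaf
      rw [leafSet_of_leaf]
      refine ⟨⟨x, rfl⟩, (SimpleGraph.connected_iff _).2 ⟨?_, ⟨⟨x, rfl⟩⟩⟩⟩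
      intro a b
      have : a = b := Subtype.ext (by
        have ha := a.2
        have hb := b.2
        simp only [Set.mem_singleton_iff] at ha hb
        rw [ha, hb])
      rw [this]
    · have hvlt := depth_lt_card T v
      have key_ih : ∀ c ∈ T.children v,
          (T.leafSet c).Nonempty ∧ ((cordGraph L).induce (T.leafSet c)).Connected := by
        intro c hcv
        have h1 := depth_lt_of_child T hcv
        exact ih (Fintype.card V - depth T c) (by omega) c le_rfl
      obtain ⟨c0, hc0⟩ := children_nonempty T hleaf
      obtain ⟨x0, hx0⟩ := (key_ih c0 hc0).1
      have reach_in : ∀ (c : V) (hcv : c ∈ T.children v) (p q : X)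
          (hp : p ∈ T.leafSet c) (hq : q ∈ T.leafSet c),
          ((cordGraph L).induce (T.leafSet v)).Reachable
            ⟨p, leafSet_child_subset T hcv hp⟩
            ⟨q, leafSet_child_subset T hcv hq⟩ := by
        intro c hcv p q hp hq
        exact reach_mono (cordGraph L) (leafSet_child_subset T hcv)
          ((key_ih c hcv).2.preconnected ⟨p, hp⟩ ⟨q, hq⟩)
      refine ⟨⟨x0, leafSet_child_subset T hc0 hx0⟩, (SimpleGraph.connected_iff _).2
        ⟨?_, ⟨⟨x0, leafSet_child_subset T hc0 hx0⟩⟩⟩⟩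
      rintro ⟨a, ha⟩ ⟨b, hb⟩
      obtain ⟨ca, hca, hxa⟩ := exists_child_mem T hleaf ha
      obtain ⟨cb, hcb, hxb⟩ := exists_child_mem T hleaf hb
      by_cases hcc : ca = cb
      · subst hcc
        exact reach_in ca hca a b hxa hxb
      · obtain ⟨p, q, hp, hq, hpq⟩ := hlasso v ca cb hca hcb hcc
        have hpq' : p ≠ q := by
          rintro rfl
          obtain ⟨a', b', hab, heq⟩ := hc _ hpq
          have ha' : a' = p := by
            have : a' ∈ ({a', b'} : Set X) := Set.mem_insert _ _
            rw [← heq] at this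
            simpa using this
          have hb' : b' = p := by
            have : b' ∈ ({a', b'} : Set X) := Set.mem_insert_iff.2 (Or.inr rfl)
            rw [← heq] at this
            simpa using this
          exact hab (ha'.trans hb'.symm)
        have edge : ((cordGraph L).induce (T.leafSet v)).Adj
            ⟨p, leafSet_child_subset T hca hp⟩ ⟨q, leafSet_child_subset T hcb hq⟩ := by
          exact ⟨hpq', hpq⟩
        have r1 := reach_in ca hca a p hxa hp
        have r2 := reach_in cb hcb q b hq hxb
        have r3 : ((cordGraph L).induce (T.leafSet v)).Reachable
            ⟨a, ha⟩ ⟨a, leafSet_child_subset T hca hxa⟩ := by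
          have : (⟨a, ha⟩ : ↥(T.leafSet v)) = ⟨a, leafSet_child_subset T hca hxa⟩ := rfl
          rw [this]
        have r4 : ((cordGraph L).induce (T.leafSet v)).Reachable
            ⟨b, leafSet_child_subset T hcb hxb⟩ ⟨b, hb⟩ := by
          have : (⟨b, hb⟩ : ↥(T.leafSet v)) = ⟨b, leafSet_child_subset T hcb hxb⟩ := rfl
          rw [this]
        exact (r3.trans r1).trans (edge.reachable.trans (r2.trans r4))

lemma leafSet_root (T : XTree X V) : T.leafSet T.root = Set.univ := by
  ext x
  simp only [Set.mem_univ, iff_true]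
  exact T.reaches (T.leaf x)

end Stmt10Aux

/-- if `L` is a topological lasso for `T`, then for every vertex `v` the
subgraph of `Γ(L)` induced by `L(v)` is connected; in particular `Γ(L)` is connected. -/
theorem stmt10 {X V : Type} [Fintype X] [Fintype V] (T : XTree X V)
    (hph : T.IsPhylo) (hX : 3 ≤ Fintype.card X)
    (L : Set (Set X)) (hc : ∀ c ∈ L, IsCord c) (hcov : ∀ x : X, ∃ c ∈ L, x ∈ c)
    (hlasso : T.IsTopoLasso L) :
    (∀ v : V, ((cordGraph L).induce (T.leafSet v)).Connected) ∧
      (cordGraph L).Connected := by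
  have hall : ∀ v : V, ((cordGraph L).induce (T.leafSet v)).Connected := fun v =>
    (Stmt10Aux.key T L hc hlasso (Fintype.card V - Stmt10Aux.depth T v) v le_rfl).2
  refine ⟨hall, ?_⟩
  have hr := hall T.root
  rw [Stmt10Aux.leafSet_root] at hr
  have hXne : Nonempty X := by
    have : 0 < Fintype.card X := by omega
    exact Fintype.card_pos_iff.1 this
  refine (SimpleGraph.connected_iff _).2 ⟨?_, hXne⟩
  intro a b
  exact (hr.preconnected ⟨a, trivial⟩ ⟨b, trivial⟩).map
    (⟨fun x => x.1, fun {x y} hxy => hxy⟩ :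
      (cordGraph L).induce Set.univ →g cordGraph L)
end
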